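/- arXiv:1706.06095 — 9 statements merged into one kernel-verified Lean document; each statement's English description precedes it below -/
import Mathlib

section
/- Let m and n be positive integers and let s_1, …, s_m be real numbers with 0 ≤ s_i ≤ 1 for all i. Then there exist indices 0 = x_0 ≤ x_1 ≤ ⋯ ≤ x_n = m such that, setting b_j = s_{x_{j-1}+1} + ⋯ + s_{x_j} (with b_j = 0 when x_{j-1} = x_j), one has |b_i − b_j| ≤ 1 for all i, j ∈ {1, …, n}. -/
noncomputable def PP (m : ℕ) (s : ℕ → ℝ) (i : ℕ) : ℝ := ∑ k ∈ Finset.range (min i m), s k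

def Valid (m n : ℕ) (x : ℕ → ℕ) : Prop := x 0 = 0 ∧ x n = m ∧ ∀ j < n, x j ≤ x (j + 1)

noncomputable def minb (m n : ℕ) (s : ℕ → ℝ) (x : ℕ → ℕ) : ℝ :=
  if h : (Finset.Icc 1 n).Nonempty then
    (Finset.Icc 1 n).inf' h (fun j => PP m s (x j) - PP m s (x (j - 1)))
  else 0

def ext (m n : ℕ) (g : Fin (n + 1) → Fin (m + 1)) : ℕ → ℕ
  | 0 => 0
  | j + 1 => if n ≤ j + 1 then m else max (ext m n g j) (g ⟨min (j + 1) n, by omega⟩).val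

noncomputable def tmax (m n : ℕ) (s : ℕ → ℝ) : ℝ :=
  Finset.univ.sup' Finset.univ_nonempty (fun g : Fin (n + 1) → Fin (m + 1) => minb m n s (ext m n g))

noncomputable def lo (m : ℕ) (s : ℕ → ℝ) (t : ℝ) : ℕ → ℕ
  | 0 => 0
  | j + 1 => sInf {i | lo m s t j ≤ i ∧ PP m s (lo m s t j) + t ≤ PP m s i}

noncomputable def hi (m : ℕ) (s : ℕ → ℝ) (t : ℝ) : ℕ → ℕ
  | 0 => 0
  | j + 1 => sSup {i | i ≤ m ∧ PP m s i ≤ PP m s (hi m s t j) + t + 1}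

open Classical in
noncomputable def yy (m n : ℕ) (s : ℕ → ℝ) (t : ℝ) : ℕ → ℕ
  | 0 => m
  | k + 1 =>
    if PP m s (yy m n s t k) - t - 1 ≤ PP m s (lo m s t (n - k - 1)) then lo m s t (n - k - 1)
    else sInf {i | PP m s (yy m n s t k) - t - 1 ≤ PP m s i}

lemma PP_zero (m : ℕ) (s : ℕ → ℝ) : PP m s 0 = 0 := by simp [PP]

lemma PP_nonneg (m : ℕ) (s : ℕ → ℝ) (hs : ∀ i, i < m → 0 ≤ s i ∧ s i ≤ 1) (i : ℕ) :
    0 ≤ PP m s i :=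
  Finset.sum_nonneg (fun k hk => (hs k (by simp only [Finset.mem_range] at hk; omega)).1)

lemma PP_mono (m : ℕ) (s : ℕ → ℝ) (hs : ∀ i, i < m → 0 ≤ s i ∧ s i ≤ 1) :
    Monotone (PP m s) := by
  intro i j hij
  apply Finset.sum_le_sum_of_subset_of_nonneg
  · exact Finset.range_subset_range.mpr (by omega)
  · intro k hk _
    exact (hs k (by simp only [Finset.mem_range] at hk; omega)).1

lemma PP_succ (m : ℕ) (s : ℕ → ℝ) (hs : ∀ i, i < m → 0 ≤ s i ∧ s i ≤ 1) (i : ℕ) :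
    PP m s (i + 1) ≤ PP m s i + 1 := by
  by_cases h : i < m
  · have h1 : min (i + 1) m = i + 1 := by omega
    have h2 : min i m = i := by omega
    simp only [PP, h1, h2, Finset.sum_range_succ]
    linarith [(hs i h).2]
  · have h1 : min (i + 1) m = min i m := by omega
    simp only [PP, h1]
    linarith

lemma PP_block (m : ℕ) (s : ℕ → ℝ) (a b : ℕ) (hab : a ≤ b) (hbm : b ≤ m) :
    ∑ k ∈ Finset.Ico a b, s k = PP m s b - PP m s a := by
  have h1 : min b m = b := by omega
  have h2 : min a m = a := by omega
  rw [PP, PP, h1, h2, Finset.sum_Ico_eq_sub _ hab]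

lemma valid_mono_le (m n : ℕ) (x : ℕ → ℕ) (hv : Valid m n x) :
    ∀ d j, j + d ≤ n → x j ≤ x (j + d) := by
  intro d
  induction d with
  | zero => intro j _; exact le_rfl
  | succ d ih =>
    intro j h
    have h1 : x j ≤ x (j + d) := ih j (by omega)
    have h2 : x (j + d) ≤ x (j + d + 1) := hv.2.2 (j + d) (by omega)
    have e : j + (d + 1) = j + d + 1 := by omega
    rw [e]
    exact le_trans h1 h2

lemma valid_le (m n : ℕ) (x : ℕ → ℕ) (hv : Valid m n x) (j : ℕ) (hj : j ≤ n) : x j ≤ m := by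
  have := valid_mono_le m n x hv (n - j) j (by omega)
  rw [show j + (n - j) = n from by omega, hv.2.1] at this
  exact this

lemma valid_mono (m n : ℕ) (x : ℕ → ℕ) (hv : Valid m n x) {j k : ℕ} (hjk : j ≤ k) (hk : k ≤ n) :
    x j ≤ x k := by
  have := valid_mono_le m n x hv (k - j) j (by omega)
  rwa [show j + (k - j) = k from by omega] at this

lemma ext_le (m n : ℕ) (g : Fin (n + 1) → Fin (m + 1)) : ∀ j, ext m n g j ≤ m := by
  intro j
  induction j with
  | zero => simp [ext]
  | succ j ih =>
    simp only [ext]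
    split
    · exact le_rfl
    · exact max_le ih (Nat.lt_succ_iff.mp (g _).isLt)

lemma ext_valid (m n : ℕ) (hn : 0 < n) (g : Fin (n + 1) → Fin (m + 1)) :
    Valid m n (ext m n g) := by
  refine ⟨rfl, ?_, ?_⟩
  · obtain ⟨n', rfl⟩ := Nat.exists_eq_succ_of_ne_zero hn.ne'
    simp [ext]
  · intro j hj
    simp only [ext]
    split
    · exact ext_le m n g j
    · exact le_max_left _ _

lemma ext_eq (m n : ℕ) (x : ℕ → ℕ) (hv : Valid m n x) (g : Fin (n + 1) → Fin (m + 1))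
    (hg : ∀ i : Fin (n + 1), (g i).val = x i.val) :
    ∀ j, j ≤ n → ext m n g j = x j := by
  intro j
  induction j with
  | zero => intro _; exact hv.1.symm
  | succ j ih =>
    intro hj
    simp only [ext]
    split
    · next h =>
      rw [show j + 1 = n from by omega]
      exact hv.2.1.symm
    · next h =>
      have e : min (j + 1) n = j + 1 := by omega
      rw [ih (by omega), hg]
      simp only [e]
      exact max_eq_right (hv.2.2 j (by omega))

lemma minb_le_tmax (m n : ℕ) (s : ℕ → ℝ) (hn : 0 < n) (x : ℕ → ℕ) (hv : Valid m n x) :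
    minb m n s x ≤ tmax m n s := by
  set g : Fin (n + 1) → Fin (m + 1) :=
    fun i => ⟨x i.val, Nat.lt_succ_of_le (valid_le m n x hv i.val (Nat.lt_succ_iff.mp i.isLt))⟩
    with hgdef
  have hg : ∀ i : Fin (n + 1), (g i).val = x i.val := fun i => rfl
  have key : minb m n s (ext m n g) = minb m n s x := by
    have hne : (Finset.Icc 1 n).Nonempty := ⟨1, by simp [Finset.mem_Icc]; omega⟩
    unfold minb
    rw [dif_pos hne, dif_pos hne]
    apply Finset.inf'_congr hne rfl
    intro j hj
    simp only [Finset.mem_Icc] at hj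
    rw [ext_eq m n x hv g hg j hj.2, ext_eq m n x hv g hg (j - 1) (by omega)]
  rw [← key]
  unfold tmax
  exact Finset.le_sup' (fun g : Fin (n + 1) → Fin (m + 1) => minb m n s (ext m n g))
    (Finset.mem_univ g)

lemma tmax_spec (m n : ℕ) (s : ℕ → ℝ) (hn : 0 < n) :
    ∃ x, Valid m n x ∧ ∀ j ∈ Finset.Icc 1 n, tmax m n s ≤ PP m s (x j) - PP m s (x (j - 1)) := by
  obtain ⟨g, -, hg⟩ := Finset.exists_mem_eq_sup' Finset.univ_nonempty
    (fun g : Fin (n + 1) → Fin (m + 1) => minb m n s (ext m n g))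
  refine ⟨ext m n g, ext_valid m n hn g, ?_⟩
  intro j hj
  rw [show tmax m n s = minb m n s (ext m n g) from hg]
  have hne : (Finset.Icc 1 n).Nonempty := ⟨1, by simp [Finset.mem_Icc]; omega⟩
  unfold minb
  rw [dif_pos hne]
  exact Finset.inf'_le _ hj

lemma tmax_nonneg (m n : ℕ) (s : ℕ → ℝ) (hn : 0 < n)
    (hs : ∀ i, i < m → 0 ≤ s i ∧ s i ≤ 1) : 0 ≤ tmax m n s := by
  set x : ℕ → ℕ := fun j => if j < n then 0 else m with hxdef
  have hv : Valid m n x := by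
    refine ⟨by simp [hxdef, hn], by simp [hxdef], ?_⟩
    intro j hj
    simp only [hxdef]
    split <;> split <;> omega
  have h0 : 0 ≤ minb m n s x := by
    have hne : (Finset.Icc 1 n).Nonempty := ⟨1, by simp [Finset.mem_Icc]; omega⟩
    unfold minb
    rw [dif_pos hne]
    apply Finset.le_inf'
    intro j hj
    simp only [Finset.mem_Icc] at hj
    have := PP_mono m s hs (valid_mono m n x hv (show j - 1 ≤ j from by omega) hj.2)
    linarith
  exact le_trans h0 (minb_le_tmax m n s hn x hv)

lemma lo_le (m n : ℕ) (s : ℕ → ℝ) (t : ℝ) (hs : ∀ i, i < m → 0 ≤ s i ∧ s i ≤ 1)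
    (x : ℕ → ℕ) (hv : Valid m n x)
    (hall : ∀ j ∈ Finset.Icc 1 n, t ≤ PP m s (x j) - PP m s (x (j - 1))) :
    ∀ j, j ≤ n → lo m s t j ≤ x j := by
  intro j
  induction j with
  | zero => intro _; exact Nat.zero_le _
  | succ j ih =>
    intro hj
    have h1 : lo m s t j ≤ x j := ih (by omega)
    have hb := hall (j + 1) (by simp [Finset.mem_Icc]; omega)
    simp only [Nat.add_sub_cancel] at hb
    have hmem : x (j + 1) ∈ {i | lo m s t j ≤ i ∧ PP m s (lo m s t j) + t ≤ PP m s i} := by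
      refine ⟨le_trans h1 (hv.2.2 j (by omega)), ?_⟩
      have := PP_mono m s hs h1
      linarith
    exact Nat.sInf_le hmem

lemma lo_spec (m n : ℕ) (s : ℕ → ℝ) (t : ℝ) (hs : ∀ i, i < m → 0 ≤ s i ∧ s i ≤ 1)
    (ht : 0 ≤ t) (x : ℕ → ℕ) (hv : Valid m n x)
    (hall : ∀ j ∈ Finset.Icc 1 n, t ≤ PP m s (x j) - PP m s (x (j - 1))) :
    ∀ j, j + 1 ≤ n →
      lo m s t j ≤ lo m s t (j + 1) ∧
      PP m s (lo m s t j) + t ≤ PP m s (lo m s t (j + 1)) ∧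
      PP m s (lo m s t (j + 1)) ≤ PP m s (lo m s t j) + t + 1 ∧
      lo m s t (j + 1) ≤ m := by
  intro j hj
  have h1 : lo m s t j ≤ x j := lo_le m n s t hs x hv hall j (by omega)
  have hb := hall (j + 1) (by simp [Finset.mem_Icc]; omega)
  simp only [Nat.add_sub_cancel] at hb
  have hmem : x (j + 1) ∈ {i | lo m s t j ≤ i ∧ PP m s (lo m s t j) + t ≤ PP m s i} := by
    refine ⟨le_trans h1 (hv.2.2 j (by omega)), ?_⟩
    have := PP_mono m s hs h1
    linarith
  have hloeq : lo m s t (j + 1) = sInf {i | lo m s t j ≤ i ∧ PP m s (lo m s t j) + t ≤ PP m s i} :=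
    rfl
  have hinf : lo m s t (j + 1) ∈ {i | lo m s t j ≤ i ∧ PP m s (lo m s t j) + t ≤ PP m s i} := by
    rw [hloeq]; exact Nat.sInf_mem ⟨_, hmem⟩
  have hup : PP m s (lo m s t (j + 1)) ≤ PP m s (lo m s t j) + t + 1 := by
    by_cases hcase : lo m s t j < lo m s t (j + 1)
    · have hnm : lo m s t (j + 1) - 1 ∉
          {i | lo m s t j ≤ i ∧ PP m s (lo m s t j) + t ≤ PP m s i} := by
        rw [hloeq]
        exact Nat.notMem_of_lt_sInf (by rw [← hloeq]; omega)
      have hPP : PP m s (lo m s t (j + 1) - 1) < PP m s (lo m s t j) + t := by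
        by_contra hcon
        push_neg at hcon
        exact hnm ⟨by omega, hcon⟩
      have hstep := PP_succ m s hs (lo m s t (j + 1) - 1)
      rw [show lo m s t (j + 1) - 1 + 1 = lo m s t (j + 1) from by omega] at hstep
      linarith
    · have heq : lo m s t j = lo m s t (j + 1) := le_antisymm hinf.1 (by omega)
      rw [← heq]
      linarith
  exact ⟨hinf.1, hinf.2, hup,
    le_trans (lo_le m n s t hs x hv hall (j + 1) hj) (valid_le m n x hv (j + 1) hj)⟩

lemma hi_le (m : ℕ) (s : ℕ → ℝ) (t : ℝ) (hs : ∀ i, i < m → 0 ≤ s i ∧ s i ≤ 1)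
    (ht : 0 ≤ t) : ∀ j, hi m s t j ≤ m := by
  intro j
  induction j with
  | zero => exact Nat.zero_le _
  | succ j ih =>
    have hself : hi m s t j ∈ {i | i ≤ m ∧ PP m s i ≤ PP m s (hi m s t j) + t + 1} :=
      ⟨ih, by linarith⟩
    have hbdd : BddAbove {i | i ≤ m ∧ PP m s i ≤ PP m s (hi m s t j) + t + 1} :=
      ⟨m, fun i h => h.1⟩
    have heq : hi m s t (j + 1) =
        sSup {i | i ≤ m ∧ PP m s i ≤ PP m s (hi m s t j) + t + 1} := rfl
    have := Nat.sSup_mem ⟨_, hself⟩ hbdd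
    rw [heq]
    exact this.1

lemma hi_spec (m : ℕ) (s : ℕ → ℝ) (t : ℝ) (hs : ∀ i, i < m → 0 ≤ s i ∧ s i ≤ 1)
    (ht : 0 ≤ t) (j : ℕ) :
    hi m s t j ≤ hi m s t (j + 1) ∧
    PP m s (hi m s t (j + 1)) ≤ PP m s (hi m s t j) + t + 1 ∧
    (hi m s t (j + 1) < m → PP m s (hi m s t j) + t < PP m s (hi m s t (j + 1))) := by
  have hself : hi m s t j ∈ {i | i ≤ m ∧ PP m s i ≤ PP m s (hi m s t j) + t + 1} :=
    ⟨hi_le m s t hs ht j, by linarith⟩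
  have hbdd : BddAbove {i | i ≤ m ∧ PP m s i ≤ PP m s (hi m s t j) + t + 1} :=
    ⟨m, fun i h => h.1⟩
  have heq : hi m s t (j + 1) =
      sSup {i | i ≤ m ∧ PP m s i ≤ PP m s (hi m s t j) + t + 1} := rfl
  have hmem : hi m s t (j + 1) ∈ {i | i ≤ m ∧ PP m s i ≤ PP m s (hi m s t j) + t + 1} := by
    rw [heq]; exact Nat.sSup_mem ⟨_, hself⟩ hbdd
  refine ⟨by rw [heq]; exact le_csSup hbdd hself, hmem.2, ?_⟩
  intro hlt
  have hnot : hi m s t (j + 1) + 1 ∉ {i | i ≤ m ∧ PP m s i ≤ PP m s (hi m s t j) + t + 1} := by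
    intro hmem'
    have h2 := le_csSup hbdd hmem'
    rw [← heq] at h2
    omega
  have hgt : PP m s (hi m s t j) + t + 1 < PP m s (hi m s t (j + 1) + 1) := by
    by_contra hcon
    push_neg at hcon
    exact hnot ⟨by omega, hcon⟩
  have hstep := PP_succ m s hs (hi m s t (j + 1))
  linarith

lemma cov (m n : ℕ) (s : ℕ → ℝ) (hn : 0 < n) (hs : ∀ i, i < m → 0 ≤ s i ∧ s i ≤ 1) :
    PP m s m ≤ PP m s (hi m s (tmax m n s) (n - 1)) + tmax m n s + 1 := by
  set t := tmax m n s with htd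
  have ht : 0 ≤ t := tmax_nonneg m n s hn hs
  by_contra hcov
  push_neg at hcov
  have himono : Monotone (hi m s t) :=
    monotone_nat_of_le_succ (fun j => (hi_spec m s t hs ht j).1)
  have hlt : ∀ j, j ≤ n - 1 → hi m s t j < m := by
    intro j hj
    rcases lt_or_eq_of_le (hi_le m s t hs ht j) with h | h
    · exact h
    · exfalso
      have h2 : PP m s m = PP m s (hi m s t j) := by rw [h]
      have h3 : PP m s (hi m s t j) ≤ PP m s (hi m s t (n - 1)) := PP_mono m s hs (himono hj)
      linarith
  set z : ℕ → ℕ := fun j => if j < n then hi m s t j else m with hzdef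
  have hvz : Valid m n z := by
    refine ⟨?_, ?_, ?_⟩
    · simp only [hzdef]
      rw [if_pos hn]
      rfl
    · simp only [hzdef]
      rw [if_neg (lt_irrefl n)]
    · intro j hj
      simp only [hzdef]
      rw [if_pos hj]
      by_cases h2 : j + 1 < n
      · rw [if_pos h2]
        exact (hi_spec m s t hs ht j).1
      · rw [if_neg h2]
        exact hi_le m s t hs ht j
  have hle := minb_le_tmax m n s hn z hvz
  have hne : (Finset.Icc 1 n).Nonempty := ⟨1, by simp [Finset.mem_Icc]; omega⟩
  have hgt : t < minb m n s z := by
    unfold minb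
    rw [dif_pos hne, Finset.lt_inf'_iff]
    intro j hj
    simp only [Finset.mem_Icc] at hj
    by_cases hjn : j < n
    · have hj1 : j - 1 < n := by omega
      simp only [hzdef]
      rw [if_pos hjn, if_pos hj1]
      have h := (hi_spec m s t hs ht (j - 1)).2.2
      rw [show j - 1 + 1 = j from by omega] at h
      have := h (hlt j (by omega))
      linarith
    · simp only [hzdef]
      rw [if_neg hjn, if_pos (show j - 1 < n from by omega),
        show j - 1 = n - 1 from by omega]
      linarith
  rw [← htd] at hle
  linarith



/-- **Block partition theorem** (Bárány–Grinberg style, Theorem 1 of the paper).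
Given reals `s 0, …, s (m-1)` in `[0,1]` and a positive integer `n`, there are
indices `0 = x 0 ≤ x 1 ≤ ⋯ ≤ x n = m` such that the block sums
`b j = ∑_{k ∈ [x (j-1), x j)} s k` satisfy `|b i − b j| ≤ 1` for all `i, j ∈ {1,…,n}`. -/
theorem block_partition (m n : ℕ) (hm : 0 < m) (hn : 0 < n) (s : ℕ → ℝ)
    (hs : ∀ i, i < m → 0 ≤ s i ∧ s i ≤ 1) :
    ∃ x : ℕ → ℕ, x 0 = 0 ∧ x n = m ∧ (∀ j, j < n → x j ≤ x (j + 1)) ∧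
      ∀ i j, 1 ≤ i → i ≤ n → 1 ≤ j → j ≤ n →
        |(∑ k ∈ Finset.Ico (x (i - 1)) (x i), s k) -
          (∑ k ∈ Finset.Ico (x (j - 1)) (x j), s k)| ≤ 1 := by
  set t := tmax m n s with htd
  have ht : 0 ≤ t := tmax_nonneg m n s hn hs
  obtain ⟨xs, hvs, halls⟩ := tmax_spec m n s hn
  rw [← htd] at halls
  have hcov := cov m n s hn hs
  rw [← htd] at hcov
  have loS := fun j hj => lo_spec m n s t hs ht xs hvs halls j hj
  have loL := lo_le m n s t hs xs hvs halls
  have hiS := hi_spec m s t hs ht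
  have hiL := hi_le m s t hs ht
  -- lo stays below hi
  have LH : ∀ j, j ≤ n → lo m s t j ≤ hi m s t j := by
    intro j
    induction j with
    | zero => intro _; exact le_rfl
    | succ j ih =>
      intro hj
      have hsp := loS j hj
      have hih := ih (by omega)
      have hPP : PP m s (lo m s t (j + 1)) ≤ PP m s (hi m s t j) + t + 1 := by
        have := PP_mono m s hs hih
        linarith [hsp.2.2.1]
      have hbdd : BddAbove {i | i ≤ m ∧ PP m s i ≤ PP m s (hi m s t j) + t + 1} :=
        ⟨m, fun i h => h.1⟩
      exact le_csSup hbdd ⟨hsp.2.2.2, hPP⟩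
  -- one step of the backward construction
  have trans : ∀ k, k + 2 ≤ n →
      lo m s t (n - k) ≤ yy m n s t k →
      PP m s (yy m n s t k) ≤ PP m s (hi m s t (n - k - 1)) + t + 1 →
      yy m n s t (k + 1) ≤ yy m n s t k ∧
      t ≤ PP m s (yy m n s t k) - PP m s (yy m n s t (k + 1)) ∧
      PP m s (yy m n s t k) - PP m s (yy m n s t (k + 1)) ≤ t + 1 ∧
      lo m s t (n - k - 1) ≤ yy m n s t (k + 1) ∧
      PP m s (yy m n s t (k + 1)) ≤ PP m s (hi m s t (n - k - 2)) + t + 1 := by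
    intro k hk h1 h2
    have e1 : n - k - 1 + 1 = n - k := by omega
    have e2 : n - k - 2 + 1 = n - k - 1 := by omega
    have hsp := loS (n - k - 1) (by omega)
    rw [e1] at hsp
    have hspHi := hiS (n - k - 2)
    rw [e2] at hspHi
    by_cases hc : PP m s (yy m n s t k) - t - 1 ≤ PP m s (lo m s t (n - k - 1))
    · have hyy : yy m n s t (k + 1) = lo m s t (n - k - 1) := by
        simp only [yy]
        rw [if_pos hc]
      rw [hyy]
      have hmono := PP_mono m s hs h1
      have hlh : lo m s t (n - k - 1) ≤ hi m s t (n - k - 1) := LH (n - k - 1) (by omega)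
      have hlhP := PP_mono m s hs hlh
      exact ⟨le_trans hsp.1 h1, by linarith [hsp.2.1], by linarith, le_rfl,
        by linarith [hspHi.2.1]⟩
    · push_neg at hc
      have hyy : yy m n s t (k + 1) = sInf {i | PP m s (yy m n s t k) - t - 1 ≤ PP m s i} := by
        simp only [yy]
        rw [if_neg (not_le.mpr hc)]
      have hmemyk : yy m n s t k ∈ {i | PP m s (yy m n s t k) - t - 1 ≤ PP m s i} := by
        simp only [Set.mem_setOf_eq]
        linarith
      have hinf : yy m n s t (k + 1) ∈ {i | PP m s (yy m n s t k) - t - 1 ≤ PP m s i} := by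
        rw [hyy]
        exact Nat.sInf_mem ⟨_, hmemyk⟩
      simp only [Set.mem_setOf_eq] at hinf
      have hlek : yy m n s t (k + 1) ≤ yy m n s t k := by
        rw [hyy]
        exact Nat.sInf_le hmemyk
      have hPP0 : 0 ≤ PP m s (lo m s t (n - k - 1)) := PP_nonneg m s hs _
      have hupper : PP m s (yy m n s t (k + 1)) ≤ PP m s (yy m n s t k) - t := by
        rcases Nat.eq_zero_or_pos (yy m n s t (k + 1)) with h0 | hpos
        · rw [h0, PP_zero]
          linarith
        · have hnm : yy m n s t (k + 1) - 1 ∉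
              {i | PP m s (yy m n s t k) - t - 1 ≤ PP m s i} := by
            rw [hyy]
            exact Nat.notMem_of_lt_sInf (by rw [← hyy]; omega)
          have hPP' : PP m s (yy m n s t (k + 1) - 1) < PP m s (yy m n s t k) - t - 1 := by
            by_contra hcon
            push_neg at hcon
            exact hnm hcon
          have hstep := PP_succ m s hs (yy m n s t (k + 1) - 1)
          rw [show yy m n s t (k + 1) - 1 + 1 = yy m n s t (k + 1) from by omega] at hstep
          linarith
      have hlo_le : lo m s t (n - k - 1) ≤ yy m n s t (k + 1) := by
        by_contra hcon
        push_neg at hcon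
        have := PP_mono m s hs (le_of_lt hcon)
        linarith
      have hhiS : hi m s t (n - k - 1) ∈ {i | PP m s (yy m n s t k) - t - 1 ≤ PP m s i} := by
        simp only [Set.mem_setOf_eq]
        linarith
      have hlehi : yy m n s t (k + 1) ≤ hi m s t (n - k - 1) := by
        rw [hyy]
        exact Nat.sInf_le hhiS
      have hfin : PP m s (yy m n s t (k + 1)) ≤ PP m s (hi m s t (n - k - 2)) + t + 1 := by
        have := PP_mono m s hs hlehi
        linarith [hspHi.2.1]
      exact ⟨hlek, by linarith, by linarith, hlo_le, hfin⟩
  -- invariant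
  have Inv : ∀ k, k + 1 ≤ n → lo m s t (n - k) ≤ yy m n s t k ∧
      PP m s (yy m n s t k) ≤ PP m s (hi m s t (n - k - 1)) + t + 1 := by
    intro k
    induction k with
    | zero =>
      intro _
      have hy0 : yy m n s t 0 = m := rfl
      constructor
      · rw [Nat.sub_zero, hy0]
        have := loL n le_rfl
        rwa [hvs.2.1] at this
      · rw [Nat.sub_zero, hy0]
        exact hcov
    | succ k ih =>
      intro hk
      have h := trans k (by omega) (ih (by omega)).1 (ih (by omega)).2
      constructor
      · rw [show n - (k + 1) = n - k - 1 from by omega]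
        exact h.2.2.2.1
      · rw [show n - (k + 1) = n - k - 1 from by omega,
          show n - k - 1 - 1 = n - k - 2 from by omega]
        exact h.2.2.2.2
  have yyle : ∀ k, k + 1 ≤ n → yy m n s t k ≤ m := by
    intro k
    induction k with
    | zero => intro _; exact le_rfl
    | succ k ih =>
      intro hk
      have h := trans k (by omega) (Inv k (by omega)).1 (Inv k (by omega)).2
      exact le_trans h.1 (ih (by omega))
  set x : ℕ → ℕ := fun j => if j = 0 then 0 else yy m n s t (n - j) with hxdef
  have hx0 : x 0 = 0 := by simp [hxdef]
  have hxn : x n = m := by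
    simp only [hxdef]
    rw [if_neg (by omega : ¬ n = 0), Nat.sub_self]
    rfl
  have hstep : ∀ j, j < n → x j ≤ x (j + 1) := by
    intro j hj
    by_cases hj0 : j = 0
    · subst hj0
      simp [hxdef]
    · simp only [hxdef]
      rw [if_neg hj0, if_neg (by omega : ¬ j + 1 = 0)]
      have h := trans (n - j - 1) (by omega)
        (Inv (n - j - 1) (by omega)).1 (Inv (n - j - 1) (by omega)).2
      have e : n - j - 1 + 1 = n - j := by omega
      rw [e] at h
      rw [show n - (j + 1) = n - j - 1 from by omega]
      exact h.1
  have hxm : ∀ j, j ≤ n → x j ≤ m := by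
    intro j hj
    by_cases hj0 : j = 0
    · subst hj0
      rw [hx0]
      exact Nat.zero_le m
    · simp only [hxdef]
      rw [if_neg hj0]
      exact yyle (n - j) (by omega)
  have hblock : ∀ j, 1 ≤ j → j ≤ n →
      t ≤ PP m s (x j) - PP m s (x (j - 1)) ∧ PP m s (x j) - PP m s (x (j - 1)) ≤ t + 1 := by
    intro j h1 h2
    by_cases hj1 : j = 1
    · subst hj1
      obtain ⟨hA1, hA2⟩ := Inv (n - 1) (by omega)
      rw [show n - (n - 1) = 1 from by omega] at hA1
      rw [show n - (n - 1) - 1 = 0 from by omega] at hA2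
      have hhi0 : PP m s (hi m s t 0) = 0 := PP_zero m s
      have hlo1 := loS 0 (by omega)
      have hlo0 : PP m s (lo m s t 0) = 0 := PP_zero m s
      rw [Nat.zero_add] at hlo1
      have hm1 : PP m s (lo m s t 1) ≤ PP m s (yy m n s t (n - 1)) := PP_mono m s hs hA1
      have hx1 : x 1 = yy m n s t (n - 1) := by
        simp only [hxdef]
        rw [if_neg (by omega : ¬ (1:ℕ) = 0)]
      rw [show (1:ℕ) - 1 = 0 from rfl, hx0, hx1, PP_zero]
      constructor
      · linarith [hlo1.2.1]
      · linarith [hA2]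
    · have h := trans (n - j) (by omega) (Inv (n - j) (by omega)).1 (Inv (n - j) (by omega)).2
      have hxj : x j = yy m n s t (n - j) := by
        simp only [hxdef]
        rw [if_neg (by omega : ¬ j = 0)]
      have hxj1 : x (j - 1) = yy m n s t (n - j + 1) := by
        simp only [hxdef]
        rw [if_neg (by omega : ¬ j - 1 = 0), show n - (j - 1) = n - j + 1 from by omega]
      rw [hxj, hxj1]
      exact ⟨h.2.1, h.2.2.1⟩
  refine ⟨x, hx0, hxn, hstep, ?_⟩
  intro i j h1i hin h1j hjn
  have hBi := hblock i h1i hin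
  have hBj := hblock j h1j hjn
  have hsi : x (i - 1) ≤ x i := by
    have := hstep (i - 1) (by omega)
    rwa [show i - 1 + 1 = i from by omega] at this
  have hsj : x (j - 1) ≤ x j := by
    have := hstep (j - 1) (by omega)
    rwa [show j - 1 + 1 = j from by omega] at this
  rw [PP_block m s (x (i - 1)) (x i) hsi (hxm i hin),
    PP_block m s (x (j - 1)) (x j) hsj (hxm j hjn), abs_le]
  constructor <;> linarith [hBi.1, hBi.2, hBj.1, hBj.2]
end

section
/- Let n ≥ 1 and let A_0, A_1, …, A_n ⊆ ℝ be closed sets such that A_0 = {0}, A_n = {s} for some s ∈ ℝ, and A_j ∩ [a, a+1] ≠ ∅ for every j ∈ {1, …, n−1} and every a ∈ ℝ. Then there exists a transversal a_0 ∈ A_0, a_1 ∈ A_1, …, a_n ∈ A_n such that, with z_j = a_j − a_{j-1}, one has |z_i − z_j| ≤ 1 for all i, j ∈ {1, …, n}. -/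
open Filter Topology

/-- A partial transversal ("chain") of length `k` with all steps in `[c, c+1]`. -/
def TChain (A : ℕ → Set ℝ) (c : ℝ) (k : ℕ) (a : ℕ → ℝ) : Prop :=
  a 0 = 0 ∧ (∀ j, 1 ≤ j → j ≤ k → a j ∈ A j) ∧
    ∀ j, 1 ≤ j → j ≤ k → c ≤ a j - a (j - 1) ∧ a j - a (j - 1) ≤ c + 1

lemma tchain_mono {A : ℕ → Set ℝ} {c : ℝ} {k : ℕ} {a : ℕ → ℝ}
    (h : TChain A c (k + 1) a) : TChain A c k a :=
  ⟨h.1, fun j h1 h2 => h.2.1 j h1 (h2.trans (Nat.le_succ k)),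
    fun j h1 h2 => h.2.2 j h1 (h2.trans (Nat.le_succ k))⟩

lemma tchain_extend {A : ℕ → Set ℝ} {c : ℝ} {k : ℕ} {a : ℕ → ℝ} {b : ℝ}
    (h : TChain A c k a) (hb : b ∈ A (k + 1)) (h1 : c ≤ b - a k) (h2 : b - a k ≤ c + 1) :
    TChain A c (k + 1) (Function.update a (k + 1) b) := by
  obtain ⟨h0, hmem, hstep⟩ := h
  refine ⟨?_, ?_, ?_⟩
  · rw [Function.update_of_ne (by omega)]; exact h0
  · intro j hj1 hj2
    rcases Nat.lt_or_ge j (k + 1) with hlt | hge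
    · rw [Function.update_of_ne (by omega)]; exact hmem j hj1 (by omega)
    · have hj : j = k + 1 := by omega
      subst hj; rw [Function.update_self]; exact hb
  · intro j hj1 hj2
    rcases Nat.lt_or_ge j (k + 1) with hlt | hge
    · rw [Function.update_of_ne (by omega : j ≠ k + 1),
        Function.update_of_ne (by omega : j - 1 ≠ k + 1)]
      exact hstep j hj1 (by omega)
    · have hj : j = k + 1 := by omega
      subst hj
      rw [Function.update_self, Nat.add_sub_cancel,
        Function.update_of_ne (by omega : k ≠ k + 1)]
      exact ⟨h1, h2⟩

lemma exists_tchain {n : ℕ} {A : ℕ → Set ℝ}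
    (hdense : ∀ j, 1 ≤ j → j < n → ∀ a : ℝ, (A j ∩ Set.Icc a (a + 1)).Nonempty)
    (c : ℝ) : ∀ k, k < n → ∃ a, TChain A c k a := by
  intro k
  induction k with
  | zero =>
    intro _
    exact ⟨fun _ => 0, rfl, fun j h1 h2 => absurd h2 (by omega),
      fun j h1 h2 => absurd h2 (by omega)⟩
  | succ k ih =>
    intro hk
    obtain ⟨a, ha⟩ := ih (by omega)
    obtain ⟨b, hbA, hbI⟩ := hdense (k + 1) (by omega) (by omega) (a k + c)
    exact ⟨_, tchain_extend ha hbA (by linarith [hbI.1]) (by linarith [hbI.2])⟩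

lemma tchain_bounds {A : ℕ → Set ℝ} {c : ℝ} {k : ℕ} {a : ℕ → ℝ} (h : TChain A c k a) :
    ∀ j, j ≤ k → (j : ℝ) * c ≤ a j ∧ a j ≤ (j : ℝ) * (c + 1) := by
  intro j
  induction j with
  | zero => intro _; simp [h.1]
  | succ j ih =>
    intro hj
    have IH := ih (by omega)
    have hs := h.2.2 (j + 1) (by omega) hj
    rw [Nat.add_sub_cancel] at hs
    push_cast
    constructor <;> nlinarith [IH.1, IH.2, hs.1, hs.2]

/-- The gap lemma: if there are chains of length `k` ending below `t` and above `t`,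
then there is one ending in `[t-1, t]`. -/
lemma tchain_gap {n : ℕ} {A : ℕ → Set ℝ} {c : ℝ}
    (hdense : ∀ j, 1 ≤ j → j < n → ∀ a : ℝ, (A j ∩ Set.Icc a (a + 1)).Nonempty) :
    ∀ k, k < n → ∀ t : ℝ, ∀ v w : ℕ → ℝ, TChain A c k v → v k ≤ t →
      TChain A c k w → t ≤ w k →
      ∃ u, TChain A c k u ∧ t - 1 ≤ u k ∧ u k ≤ t := by
  intro k
  induction k with
  | zero =>
    intro _ t v w hv hvt hw hwt
    refine ⟨v, hv, ?_, hvt⟩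
    rw [hv.1]; rw [hw.1] at hwt; linarith
  | succ k ih =>
    intro hk t v w hv hvt hw hwt
    by_cases hv1 : t - 1 ≤ v (k + 1)
    · exact ⟨v, hv, hv1, hvt⟩
    by_cases hw1 : w (k + 1) ≤ t
    · exact ⟨w, hw, by linarith, hw1⟩
    push_neg at hv1 hw1
    obtain ⟨b, hbA, hbI⟩ := hdense (k + 1) (by omega) (by omega) (t - 1)
    have hb1 : t - 1 ≤ b := hbI.1
    have hb2 : b ≤ t := by linarith [hbI.2]
    by_cases h2 : w k + c < b
    · have hwk : TChain A c k w := tchain_mono hw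
      have hstep := hw.2.2 (k + 1) (by omega) le_rfl
      rw [Nat.add_sub_cancel] at hstep
      refine ⟨Function.update w (k + 1) b,
        tchain_extend hwk hbA (by linarith) (by linarith [hstep.2]), ?_, ?_⟩
      · rw [Function.update_self]; exact hb1
      · rw [Function.update_self]; exact hb2
    · push_neg at h2
      have hvk := tchain_mono hv
      have hwk := tchain_mono hw
      have hvstep := hv.2.2 (k + 1) (by omega) le_rfl
      rw [Nat.add_sub_cancel] at hvstep
      have h3 : v k ≤ b - c := by linarith [hvstep.1]
      have h4 : b - c ≤ w k := by linarith
      obtain ⟨p, hp, hp1, hp2⟩ := ih (by omega) (b - c) v w hvk h3 hwk h4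
      refine ⟨Function.update p (k + 1) b,
        tchain_extend hp hbA (by linarith) (by linarith), ?_, ?_⟩
      · rw [Function.update_self]; exact hb1
      · rw [Function.update_self]; exact hb2

/-- Compactness: a limit of chains (for converging parameters) is a chain. -/
lemma tchain_limit {n : ℕ} {A : ℕ → Set ℝ} (m : ℕ) (hm : m < n)
    (hclosed : ∀ j, j ≤ n → IsClosed (A j))
    (c : ℕ → ℝ) (c₀ : ℝ) (hc : Tendsto c atTop (𝓝 c₀))
    (a : ℕ → ℕ → ℝ) (ha : ∀ k, TChain A (c k) m (a k)) :
    ∃ (b : ℕ → ℝ) (φ : ℕ → ℕ), TChain A c₀ m b ∧ StrictMono φ ∧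
      Tendsto (fun k => a (φ k) m) atTop (𝓝 (b m)) := by
  obtain ⟨R1, hR1⟩ := hc.bddAbove_range
  obtain ⟨R0, hR0⟩ := hc.bddBelow_range
  have hcub : ∀ k, c k ≤ R1 := fun k => hR1 ⟨k, rfl⟩
  have hclb : ∀ k, R0 ≤ c k := fun k => hR0 ⟨k, rfl⟩
  have hv : ∀ k, (fun j : Fin (m + 1) => a k (j : ℕ)) ∈
      Set.Icc (fun j : Fin (m + 1) => (j : ℝ) * R0) (fun j : Fin (m + 1) => (j : ℝ) * (R1 + 1)) := by
    intro k
    have hb := tchain_bounds (ha k)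
    refine ⟨fun j => ?_, fun j => ?_⟩
    · have h1 := (hb (j : ℕ) (Nat.lt_succ_iff.mp j.2)).1
      have h2 : ((j : ℕ) : ℝ) * R0 ≤ ((j : ℕ) : ℝ) * c k :=
        mul_le_mul_of_nonneg_left (hclb k) (Nat.cast_nonneg _)
      exact h2.trans h1
    · have h1 := (hb (j : ℕ) (Nat.lt_succ_iff.mp j.2)).2
      have h2 : ((j : ℕ) : ℝ) * (c k + 1) ≤ ((j : ℕ) : ℝ) * (R1 + 1) :=
        mul_le_mul_of_nonneg_left (by linarith [hcub k]) (Nat.cast_nonneg _)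
      exact h1.trans h2
  obtain ⟨b₀, -, φ, hφ, hconv⟩ := isCompact_Icc.tendsto_subseq hv
  have hcoord : ∀ j : Fin (m + 1),
      Tendsto (fun k => a (φ k) (j : ℕ)) atTop (𝓝 (b₀ j)) :=
    fun j => tendsto_pi_nhds.mp hconv j
  have hc' : Tendsto (fun k => c (φ k)) atTop (𝓝 c₀) := hc.comp hφ.tendsto_atTop
  set b : ℕ → ℝ := fun j => if h : j < m + 1 then b₀ ⟨j, h⟩ else 0 with hbdef
  have hbj : ∀ j, j ≤ m → Tendsto (fun k => a (φ k) j) atTop (𝓝 (b j)) := by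
    intro j hj
    have h' : j < m + 1 := Nat.lt_succ_of_le hj
    have hbe : b j = b₀ ⟨j, h'⟩ := dif_pos h'
    rw [hbe]
    exact hcoord ⟨j, h'⟩
  refine ⟨b, φ, ⟨?_, ?_, ?_⟩, hφ, hbj m le_rfl⟩
  · exact tendsto_nhds_unique (hbj 0 (Nat.zero_le m))
      (tendsto_const_nhds.congr fun k => ((ha (φ k)).1).symm)
  · intro j h1 h2
    exact (hclosed j (by omega)).mem_of_tendsto (hbj j h2)
      (Filter.Eventually.of_forall fun k => (ha (φ k)).2.1 j h1 h2)
  · intro j h1 h2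
    have t1 := hbj j h2
    have t2 := hbj (j - 1) (by omega)
    have hd := t1.sub t2
    constructor
    · exact le_of_tendsto_of_tendsto' hc' hd fun k => ((ha (φ k)).2.2 j h1 h2).1
    · exact le_of_tendsto_of_tendsto' hd (hc'.add tendsto_const_nhds)
        fun k => ((ha (φ k)).2.2 j h1 h2).2

lemma tchain_closed_le {n : ℕ} {A : ℕ → Set ℝ} (s : ℝ) (m : ℕ) (hm : m < n)
    (hclosed : ∀ j, j ≤ n → IsClosed (A j)) :
    IsClosed {c : ℝ | ∃ a, TChain A c m a ∧ a m ≤ s - c} := by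
  apply IsSeqClosed.isClosed
  intro c c₀ hmem hc
  choose a ha hle using hmem
  obtain ⟨b, φ, hb, hφ, hbm⟩ := tchain_limit m hm hclosed c c₀ hc a ha
  refine ⟨b, hb, ?_⟩
  have h1 : Tendsto (fun k => s - c (φ k)) atTop (𝓝 (s - c₀)) :=
    tendsto_const_nhds.sub (hc.comp hφ.tendsto_atTop)
  exact le_of_tendsto_of_tendsto' hbm h1 fun k => hle (φ k)

lemma tchain_closed_ge {n : ℕ} {A : ℕ → Set ℝ} (s : ℝ) (m : ℕ) (hm : m < n)
    (hclosed : ∀ j, j ≤ n → IsClosed (A j)) :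
    IsClosed {c : ℝ | ∃ a, TChain A c m a ∧ s - c ≤ a m} := by
  apply IsSeqClosed.isClosed
  intro c c₀ hmem hc
  choose a ha hle using hmem
  obtain ⟨b, φ, hb, hφ, hbm⟩ := tchain_limit m hm hclosed c c₀ hc a ha
  refine ⟨b, hb, ?_⟩
  have h1 : Tendsto (fun k => s - c (φ k)) atTop (𝓝 (s - c₀)) :=
    tendsto_const_nhds.sub (hc.comp hφ.tendsto_atTop)
  exact le_of_tendsto_of_tendsto' h1 hbm fun k => hle (φ k)

/-- **Transversal theorem** (Theorem 2 of the paper). Given closed sets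
`A 0, …, A n ⊆ ℝ` with `A 0 = {0}`, `A n = {s}`, and `A j ∩ [a, a+1] ≠ ∅` for every
`j ∈ {1,…,n−1}` and every `a ∈ ℝ`, there is a transversal `a j ∈ A j` such that the
differences `z j = a j − a (j−1)` satisfy `|z i − z j| ≤ 1` for all `i, j ∈ {1,…,n}`. -/
theorem transversal_theorem (n : ℕ) (hn : 1 ≤ n) (A : ℕ → Set ℝ) (s : ℝ)
    (hclosed : ∀ j, j ≤ n → IsClosed (A j))
    (hA0 : A 0 = {0}) (hAn : A n = {s})
    (hdense : ∀ j, 1 ≤ j → j < n → ∀ a : ℝ, (A j ∩ Set.Icc a (a + 1)).Nonempty) :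
    ∃ a : ℕ → ℝ, (∀ j, j ≤ n → a j ∈ A j) ∧
      ∀ i j, 1 ≤ i → i ≤ n → 1 ≤ j → j ≤ n →
        |(a i - a (i - 1)) - (a j - a (j - 1))| ≤ 1 := by
  obtain ⟨m, rfl⟩ : ∃ m, n = m + 1 := ⟨n - 1, by omega⟩
  have hm : m < m + 1 := Nat.lt_succ_self m
  set L : Set ℝ := {c : ℝ | ∃ a, TChain A c m a ∧ a m ≤ s - c} with hLdef
  set U : Set ℝ := {c : ℝ | ∃ a, TChain A c m a ∧ s - c ≤ a m} with hUdef
  have hLc : IsClosed L := tchain_closed_le (n := m + 1) s m hm hclosed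
  have hUc : IsClosed U := tchain_closed_ge (n := m + 1) s m hm hclosed
  have hcover : ∀ c : ℝ, c ∈ L ∪ U := by
    intro c
    obtain ⟨a, ha⟩ := exists_tchain hdense c m hm
    rcases le_total (a m) (s - c) with h | h
    · exact Or.inl ⟨a, ha, h⟩
    · exact Or.inr ⟨a, ha, h⟩
  have hmne : ((m : ℝ) + 1) ≠ 0 := by positivity
  -- L is nonempty
  have hLne : (s - (m : ℝ)) / ((m : ℝ) + 1) ∈ L := by
    set cL : ℝ := (s - (m : ℝ)) / ((m : ℝ) + 1) with hcLdef
    have hcL : ((m : ℝ) + 1) * cL = s - m := by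
      rw [hcLdef, mul_div_cancel₀ _ hmne]
    obtain ⟨a, ha⟩ := exists_tchain hdense cL m hm
    refine ⟨a, ha, ?_⟩
    have := (tchain_bounds ha m le_rfl).2
    nlinarith [this, hcL]
  -- U is nonempty
  have hUne : s / ((m : ℝ) + 1) ∈ U := by
    set cU : ℝ := s / ((m : ℝ) + 1) with hcUdef
    have hcU : ((m : ℝ) + 1) * cU = s := by
      rw [hcUdef, mul_div_cancel₀ _ hmne]
    obtain ⟨a, ha⟩ := exists_tchain hdense cU m hm
    refine ⟨a, ha, ?_⟩
    have := (tchain_bounds ha m le_rfl).1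
    nlinarith [this, hcU]
  have hinter : (L ∩ U).Nonempty := by
    by_contra hnon
    rw [Set.not_nonempty_iff_eq_empty] at hnon
    have hLU : L = Uᶜ := by
      ext c
      simp only [Set.mem_compl_iff]
      constructor
      · intro hc hU
        have : c ∈ L ∩ U := ⟨hc, hU⟩
        rw [hnon] at this
        exact this
      · intro hc
        rcases hcover c with h' | h'
        · exact h'
        · exact absurd h' hc
    have hclopen : IsClopen L := ⟨hLc, by rw [hLU]; exact hUc.isOpen_compl⟩
    rcases isClopen_iff.mp hclopen with h0 | h0
    · rw [h0] at hLne; exact hLne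
    · have : s / ((m : ℝ) + 1) ∈ L ∩ U := ⟨by rw [h0]; trivial, hUne⟩
      rw [hnon] at this
      exact this
  obtain ⟨c, ⟨v, hv, hvle⟩, ⟨w, hw, hwge⟩⟩ := hinter
  obtain ⟨u, hu, hu1, hu2⟩ := tchain_gap hdense m hm (s - c) v w hv hvle hw hwge
  refine ⟨Function.update u (m + 1) s, ?_, ?_⟩
  · intro j hj
    rcases Nat.lt_or_ge j (m + 1) with h | h
    · rw [Function.update_of_ne (by omega)]
      rcases Nat.eq_zero_or_pos j with rfl | hj1
      · rw [hu.1, hA0]; exact Set.mem_singleton 0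
      · exact hu.2.1 j hj1 (by omega)
    · have hj' : j = m + 1 := by omega
      subst hj'
      rw [Function.update_self, hAn]
      exact Set.mem_singleton s
  · have hz : ∀ j, 1 ≤ j → j ≤ m + 1 →
        c ≤ Function.update u (m + 1) s j - Function.update u (m + 1) s (j - 1) ∧
          Function.update u (m + 1) s j - Function.update u (m + 1) s (j - 1) ≤ c + 1 := by
      intro j h1 h2
      rcases Nat.lt_or_ge j (m + 1) with h | h
      · rw [Function.update_of_ne (by omega : j ≠ m + 1),
          Function.update_of_ne (by omega : j - 1 ≠ m + 1)]
        exact hu.2.2 j h1 (by omega)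
      · have hj' : j = m + 1 := by omega
        subst hj'
        rw [Nat.add_sub_cancel, Function.update_self,
          Function.update_of_ne (by omega : m ≠ m + 1)]
        constructor <;> linarith
    intro i j hi1 hi2 hj1 hj2
    have Hi := hz i hi1 hi2
    have Hj := hz j hj1 hj2
    apply abs_le.mpr
    constructor <;> linarith [Hi.1, Hi.2, Hj.1, Hj.2]
end

section
/- Let n ≥ 1, let s be an integer not divisible by n, and set A_0 = {0}, A_i = ℤ for i ∈ {1, …, n−1}, A_n = {s}. Then for every transversal a_0 ∈ A_0, …, a_n ∈ A_n, setting z_j = a_j − a_{j-1}, there exist i, j ∈ {1, …, n} with |z_i − z_j| ≥ 1. Hence the bound 1 in the transversal theorem is best possible. -/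
/-- Sharpness of the transversal theorem: with `A 0 = {0}`, `A i = ℤ` for
`i ∈ {1,…,n−1}` and `A n = {s}` for an integer `s` not divisible by `n`, every
transversal `a j ∈ A j` has two differences `z i = a i − a (i−1)`,
`z j = a j − a (j−1)` with `|z i − z j| ≥ 1`. -/
theorem transversal_theorem_sharp (n : ℕ) (hn : 1 ≤ n) (s : ℤ) (hdvd : ¬ (n : ℤ) ∣ s)
    (a : ℕ → ℝ) (ha0 : a 0 = 0) (han : a n = (s : ℝ))
    (haZ : ∀ i, 1 ≤ i → i < n → ∃ k : ℤ, a i = (k : ℝ)) :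
    ∃ i j, 1 ≤ i ∧ i ≤ n ∧ 1 ≤ j ∧ j ≤ n ∧
      1 ≤ |(a i - a (i - 1)) - (a j - a (j - 1))| := by
  by_contra h
  push_neg at h
  -- every a i with i ≤ n is an integer
  have hint : ∀ i, ∃ k : ℤ, i ≤ n → a i = (k : ℝ) := by
    intro i
    by_cases hle : i ≤ n
    · rcases Nat.eq_zero_or_pos i with h0 | h1
      · exact ⟨0, by simp [h0, ha0]⟩
      · rcases lt_or_eq_of_le hle with hlt | heq
        · obtain ⟨k, hk⟩ := haZ i h1 hlt
          exact ⟨k, fun _ => hk⟩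
        · exact ⟨s, fun _ => heq ▸ han⟩
    · exact ⟨0, fun h' => absurd h' hle⟩
  choose b hb using hint
  -- all consecutive differences are equal
  have hdiff : ∀ i, 1 ≤ i → i ≤ n → a i - a (i - 1) = a 1 - a 0 := by
    intro i h1 hle
    have h1n : 1 ≤ n := hn
    have hlt := h i 1 h1 hle le_rfl h1n
    have hi : a i = (b i : ℝ) := hb i hle
    have hi1 : a (i - 1) = (b (i - 1) : ℝ) := hb (i - 1) (le_trans (Nat.sub_le i 1) hle)
    have h1' : a 1 = (b 1 : ℝ) := hb 1 h1n
    have h0' : a 0 = (b 0 : ℝ) := hb 0 (Nat.zero_le n)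
    rw [hi, hi1, h1', h0'] at hlt ⊢
    have : ((b i - b (i - 1) - (b 1 - b 0) : ℤ) : ℝ) = 0 := by
      have := abs_lt.mp (by push_cast at hlt ⊢; simpa using hlt)
      have hz : b i - b (i - 1) - (b 1 - b 0) = 0 := by
        have h1 : ((b i - b (i - 1) - (b 1 - b 0) : ℤ) : ℝ) < 1 := by push_cast; linarith [this.2]
        have h2 : (-1 : ℝ) < ((b i - b (i - 1) - (b 1 - b 0) : ℤ) : ℝ) := by push_cast; linarith [this.1]
        have h1i : b i - b (i - 1) - (b 1 - b 0) < 1 := by exact_mod_cast h1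
        have h2i : (-1 : ℤ) < b i - b (i - 1) - (b 1 - b 0) := by exact_mod_cast h2
        omega
      rw [hz]; simp
    push_cast at this ⊢
    linarith
  -- hence a m = m * a 1 for m ≤ n
  have key : ∀ m, m ≤ n → a m = (m : ℝ) * a 1 := by
    intro m
    induction m with
    | zero => intro _; simp [ha0]
    | succ k ih =>
      intro hk
      have hk' : k ≤ n := le_trans (Nat.le_succ k) hk
      have := hdiff (k + 1) (Nat.le_add_left 1 k) hk
      simp only [Nat.add_sub_cancel] at this
      have := ih hk'
      push_cast
      linarith [hdiff (k + 1) (Nat.le_add_left 1 k) hk, ih hk', ha0]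
  -- so s = n * b 1, contradicting non-divisibility
  have h1' : a 1 = (b 1 : ℝ) := hb 1 hn
  have : (s : ℝ) = ((n : ℤ) * b 1 : ℤ) := by
    rw [← han, key n le_rfl, h1']; push_cast; ring
  exact hdvd ⟨b 1, by exact_mod_cast this⟩
end

section
/- Let A_0, A_1, …, A_n be a grid-like sequence in ℝ^d (with the Euclidean norm), with A_0 = {0} and A_n = {s}. Define B_0 = {0} ⊆ ℝ^{d+1}, B_i = A_i × ℝ for i ∈ {1, …, n−1}, and B_n = {(s, 0)} ⊆ ℝ^{d+1}. Then B_0, B_1, …, B_n is a grid-like sequence in ℝ^{d+1} (with the Euclidean norm), and for every transversal (b_0, …, b_n) of (B_i), the projections a_i = π(b_i) ∈ ℝ^d onto the first d coordinates form a transversal of (A_i) satisfying D((a_i)) ≤ D((b_i)). -/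
/-- Projection of `ℝ^{d+1}` (with the Euclidean norm) onto the first `d` coordinates. -/
noncomputable def projFirst (d : ℕ) (v : EuclideanSpace ℝ (Fin (d + 1))) :
    EuclideanSpace ℝ (Fin d) :=
  WithLp.toLp 2 (fun i : Fin d => v i.castSucc)

lemma projFirst_sub (d : ℕ) (x y : EuclideanSpace ℝ (Fin (d + 1))) :
    projFirst d (x - y) = projFirst d x - projFirst d y := by
  ext i; rfl

lemma projFirst_norm_le (d : ℕ) (v : EuclideanSpace ℝ (Fin (d + 1))) :
    ‖projFirst d v‖ ≤ ‖v‖ := by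
  rw [EuclideanSpace.norm_eq, EuclideanSpace.norm_eq]
  apply Real.sqrt_le_sqrt
  rw [Fin.sum_univ_castSucc]
  exact le_add_of_nonneg_right (by positivity)

lemma projFirst_continuous (d : ℕ) : Continuous (projFirst d) := by
  apply (PiLp.continuous_toLp 2 _).comp; apply continuous_pi
  intro i
  exact (EuclideanSpace.proj (𝕜 := ℝ) (Fin.castSucc i)).continuous

lemma norm_eq_of_last_zero (d : ℕ) (v : EuclideanSpace ℝ (Fin (d + 1)))
    (h : v (Fin.last d) = 0) : ‖v‖ = ‖projFirst d v‖ := by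
  rw [EuclideanSpace.norm_eq, EuclideanSpace.norm_eq, Fin.sum_univ_castSucc, h]
  simp [projFirst]

/-- **Proposition 1**: `D*_{d+1} ≥ D*_d`. If `A 0, …, A n` is a grid-like sequence in
`ℝ^d`, then `B 0 = {0}`, `B i = A i × ℝ` `(1 ≤ i ≤ n−1)`, `B n = {(s,0)}` is a grid-like
sequence in `ℝ^{d+1}`, and for every transversal `b` of `(B i)` the projections
`a i = π (b i)` form a transversal of `(A i)` with `D((a i)) ≤ D((b i))`. -/
theorem gridlike_lift (d n : ℕ) (hn : 1 ≤ n)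
    (A : ℕ → Set (EuclideanSpace ℝ (Fin d))) (s : EuclideanSpace ℝ (Fin d))
    (hAclosed : ∀ i, i ≤ n → IsClosed (A i))
    (hA0 : A 0 = {0}) (hAn : A n = {s})
    (hAdense : ∀ i, 1 ≤ i → i < n → ∀ a : EuclideanSpace ℝ (Fin d),
      ∃ y ∈ A i, ‖y - a‖ ≤ 1)
    (B : ℕ → Set (EuclideanSpace ℝ (Fin (d + 1))))
    (hB0 : B 0 = {0}) (hBn : B n = {(WithLp.toLp 2 (Fin.snoc (α := fun _ => ℝ) (WithLp.ofLp s) 0) : EuclideanSpace ℝ (Fin (d + 1)))})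
    (hBi : ∀ i, 1 ≤ i → i < n → B i = {v | projFirst d v ∈ A i}) :
    -- `B 0, …, B n` is a grid-like sequence in `ℝ^{d+1}`:
    ((∀ i, i ≤ n → IsClosed (B i)) ∧
      (∀ i, 1 ≤ i → i < n → ∀ a : EuclideanSpace ℝ (Fin (d + 1)),
        ∃ y ∈ B i, ‖y - a‖ ≤ 1)) ∧
    -- projection of any transversal of `(B i)` is a transversal of `(A i)`
    -- with at most the same diameter:
    ∀ b : ℕ → EuclideanSpace ℝ (Fin (d + 1)), (∀ i, i ≤ n → b i ∈ B i) →
      (∀ i, i ≤ n → projFirst d (b i) ∈ A i) ∧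
      ∀ C : ℝ,
        (∀ i j, 1 ≤ i → i ≤ n → 1 ≤ j → j ≤ n →
          ‖(b i - b (i - 1)) - (b j - b (j - 1))‖ ≤ C) →
        (∀ i j, 1 ≤ i → i ≤ n → 1 ≤ j → j ≤ n →
          ‖(projFirst d (b i) - projFirst d (b (i - 1))) -
            (projFirst d (b j) - projFirst d (b (j - 1)))‖ ≤ C) := by
  refine ⟨⟨?_, ?_⟩, ?_⟩
  · -- closedness
    intro i hi
    rcases Nat.eq_zero_or_pos i with rfl | hpos
    · rw [hB0]; exact isClosed_singleton
    · rcases eq_or_lt_of_le hi with rfl | hlt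
      · rw [hBn]; exact isClosed_singleton
      · rw [hBi i hpos hlt]
        exact (hAclosed i hi).preimage (projFirst_continuous d)
  · -- density
    intro i h1 h2 a
    obtain ⟨y, hy, hny⟩ := hAdense i h1 h2 (projFirst d a)
    set w : EuclideanSpace ℝ (Fin (d+1)) :=
      WithLp.toLp 2 (Fin.snoc (α := fun _ : Fin (d+1) => ℝ) (WithLp.ofLp y) (a (Fin.last d))) with hw
    refine ⟨w, ?_, ?_⟩
    · rw [hBi i h1 h2]
      have hproj : projFirst d w = y := by
        ext j; simp [projFirst, hw]
      simpa [hproj] using hy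
    · have hlast : (w - a) (Fin.last d) = 0 := by
        have h1 : w (Fin.last d) = a (Fin.last d) := by simp [hw]
        show w (Fin.last d) - a (Fin.last d) = 0
        rw [h1]; ring
      have hproj : projFirst d w = y := by
        ext j; simp [projFirst, hw]
      rw [norm_eq_of_last_zero d _ hlast, projFirst_sub, hproj]
      exact hny
  · -- transversal projection
    intro b hb
    constructor
    · intro i hi
      rcases Nat.eq_zero_or_pos i with rfl | hpos
      · have := hb 0 (Nat.zero_le n)
        rw [hB0] at this
        simp only [Set.mem_singleton_iff] at this
        rw [this, hA0]
        have : projFirst d (0 : EuclideanSpace ℝ (Fin (d+1))) = 0 := by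
          ext j; rfl
        simp [this]
      · rcases eq_or_lt_of_le hi with rfl | hlt
        · have := hb i le_rfl
          rw [hBn] at this
          simp only [Set.mem_singleton_iff] at this
          rw [this, hAn]
          have : projFirst d (WithLp.toLp 2 (Fin.snoc (α := fun _ => ℝ) (WithLp.ofLp s) 0) : EuclideanSpace ℝ (Fin (d + 1))) = s := by
            ext j; simp [projFirst]
          simp [this]
        · have := hb i hi
          rw [hBi i hpos hlt] at this
          exact this
    · intro C hC i j h1i h2i h1j h2j
      calc ‖(projFirst d (b i) - projFirst d (b (i - 1))) -
            (projFirst d (b j) - projFirst d (b (j - 1)))‖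
          = ‖projFirst d ((b i - b (i-1)) - (b j - b (j-1)))‖ := by
            rw [projFirst_sub, projFirst_sub, projFirst_sub]
        _ ≤ ‖(b i - b (i-1)) - (b j - b (j-1))‖ := projFirst_norm_le d _
        _ ≤ C := hC i j h1i h2i h1j h2j
end

section
/- Let E be a real normed vector space and let A_0, A_1, …, A_n ⊆ E be closed sets with A_0 = {0}, A_n = {s} for some s ∈ E, and (a + B) ∩ A_i ≠ ∅ for every i ∈ {1, …, n−1} and every a ∈ E, where B is the closed unit ball of E. Then there exists a transversal a_0 ∈ A_0, …, a_n ∈ A_n such that, with z_i = a_i − a_{i-1}, one has ‖z_i − z_j‖ ≤ 4 for all i, j ∈ {1, …, n}. -/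
/-- **Proposition 2**: `D*_d ≤ 4`. For every grid-like sequence of closed sets
`A 0, …, A n` in a real normed vector space `E` (i.e. `A 0 = {0}`, `A n = {s}`, and
every translate `a + B` of the closed unit ball meets `A i` for `1 ≤ i ≤ n−1`),
there is a transversal `a i ∈ A i` whose differences `z i = a i − a (i−1)` satisfy
`‖z i − z j‖ ≤ 4` for all `i, j ∈ {1,…,n}`. -/
theorem transversal_diam_le_four (E : Type*) [NormedAddCommGroup E] [NormedSpace ℝ E]
    (n : ℕ) (hn : 1 ≤ n) (A : ℕ → Set E) (s : E)
    (hclosed : ∀ i, i ≤ n → IsClosed (A i))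
    (hA0 : A 0 = {0}) (hAn : A n = {s})
    (hdense : ∀ i, 1 ≤ i → i < n → ∀ a : E, ∃ y ∈ A i, ‖y - a‖ ≤ 1) :
    ∃ a : ℕ → E, (∀ i, i ≤ n → a i ∈ A i) ∧
      ∀ i j, 1 ≤ i → i ≤ n → 1 ≤ j → j ≤ n →
        ‖(a i - a (i - 1)) - (a j - a (j - 1))‖ ≤ 4 := by
  have hn0 : (n : ℝ) ≠ 0 := Nat.cast_ne_zero.mpr (by omega)
  have key : ∀ i, i ≤ n → ∃ y ∈ A i, ‖y - ((i : ℝ) / n) • s‖ ≤ 1 := by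
    intro i hi
    rcases Nat.eq_zero_or_pos i with h0 | h1
    · subst h0
      exact ⟨0, by simp [hA0], by simp⟩
    rcases eq_or_lt_of_le hi with hin | hin
    · subst hin
      refine ⟨s, by simp [hAn], ?_⟩
      rw [div_self hn0]
      simp
    · exact hdense i h1 hin _
  choose! a ha hnorm using key
  refine ⟨a, ha, ?_⟩
  have step : ∀ i, 1 ≤ i → i ≤ n → ‖(a i - a (i - 1)) - ((1 : ℝ) / n) • s‖ ≤ 2 := by
    intro i h1 hi
    have e1 : (a i - a (i - 1)) - ((1 : ℝ) / n) • s
        = (a i - ((i : ℝ) / n) • s) - (a (i - 1) - (((i - 1 : ℕ) : ℝ) / n) • s) := by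
      have : ((i : ℝ) / n) • s - (((i - 1 : ℕ) : ℝ) / n) • s = ((1 : ℝ) / n) • s := by
        rw [← sub_smul]
        congr 1
        have : ((i - 1 : ℕ) : ℝ) = (i : ℝ) - 1 := by
          push_cast [h1]; ring
        rw [this]; ring
      rw [← this]; abel
    rw [e1]
    calc ‖(a i - ((i : ℝ) / n) • s) - (a (i - 1) - (((i - 1 : ℕ) : ℝ) / n) • s)‖
        ≤ ‖a i - ((i : ℝ) / n) • s‖ + ‖a (i - 1) - (((i - 1 : ℕ) : ℝ) / n) • s‖ :=
          norm_sub_le _ _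
      _ ≤ 1 + 1 := add_le_add (hnorm i hi) (hnorm (i - 1) (by omega))
      _ = 2 := by norm_num
  intro i j h1i hin h1j hjn
  calc ‖(a i - a (i - 1)) - (a j - a (j - 1))‖
      = ‖((a i - a (i - 1)) - ((1 : ℝ) / n) • s)
          - ((a j - a (j - 1)) - ((1 : ℝ) / n) • s)‖ := by abel_nf
    _ ≤ ‖(a i - a (i - 1)) - ((1 : ℝ) / n) • s‖
        + ‖(a j - a (j - 1)) - ((1 : ℝ) / n) • s‖ := norm_sub_le _ _
    _ ≤ 2 + 2 := add_le_add (step i h1i hin) (step j h1j hjn)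
    _ = 4 := by norm_num
end

section
/- Let n ≥ 1 and let A_1, …, A_{n−1} ⊆ ℝ be closed sets with A_i ∩ [a, a+1] ≠ ∅ for every a ∈ ℝ, and define the functions L_h, R_h : ℝ → ℝ by the recursion L_1(x) = x, R_1(x) = x + 1, L_{i+1}(x) = x + min{a ∈ A_i : a ≥ L_i(x)}, R_{i+1}(x) = x + 1 + max{a ∈ A_i : a ≤ R_i(x)} for 1 ≤ i ≤ n−1. Then for every h ∈ {1, …, n} and every p ∈ ℝ there exists x ∈ ℝ with L_h(x) ≤ p ≤ R_h(x); that is, the intervals J_h(x) = [L_h(x), R_h(x)] over all x ∈ ℝ cover ℝ. -/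
/-- The left endpoints `L_h(x)` of the intervals `J_h(x)`:
`L 1 x = x` and `L (i+1) x = x + min {a ∈ A i : a ≥ L i x}`. -/
noncomputable def Lfun (A : ℕ → Set ℝ) : ℕ → ℝ → ℝ
  | 0, x => x
  | 1, x => x
  | (i + 2), x => x + sInf {a : ℝ | a ∈ A (i + 1) ∧ Lfun A (i + 1) x ≤ a}

/-- The right endpoints `R_h(x)` of the intervals `J_h(x)`:
`R 1 x = x + 1` and `R (i+1) x = x + 1 + max {a ∈ A i : a ≤ R i x}`. -/
noncomputable def Rfun (A : ℕ → Set ℝ) : ℕ → ℝ → ℝ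
  | 0, x => x + 1
  | 1, x => x + 1
  | (i + 2), x => x + 1 + sSup {a : ℝ | a ∈ A (i + 1) ∧ a ≤ Rfun A (i + 1) x}

namespace IntervalsCoverAux

noncomputable def mfun (B : Set ℝ) (c : ℝ) : ℝ := sInf {a : ℝ | a ∈ B ∧ c ≤ a}
noncomputable def Mfun (B : Set ℝ) (c : ℝ) : ℝ := sSup {a : ℝ | a ∈ B ∧ a ≤ c}

lemma Lfun_succ (A : ℕ → Set ℝ) (i : ℕ) (x : ℝ) :
    Lfun A (i + 1 + 1) x = x + mfun (A (i + 1)) (Lfun A (i + 1) x) := rfl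

lemma Rfun_succ (A : ℕ → Set ℝ) (i : ℕ) (x : ℝ) :
    Rfun A (i + 1 + 1) x = x + 1 + Mfun (A (i + 1)) (Rfun A (i + 1) x) := rfl

variable {B : Set ℝ}

lemma iset_nonempty (hd : ∀ a : ℝ, (B ∩ Set.Icc a (a + 1)).Nonempty) (c : ℝ) :
    {a : ℝ | a ∈ B ∧ c ≤ a}.Nonempty := by
  obtain ⟨a, haB, h1, h2⟩ := hd c
  exact ⟨a, haB, h1⟩

lemma iset_bdd (c : ℝ) : BddBelow {a : ℝ | a ∈ B ∧ c ≤ a} := ⟨c, fun a ha => ha.2⟩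

lemma sset_nonempty (hd : ∀ a : ℝ, (B ∩ Set.Icc a (a + 1)).Nonempty) (c : ℝ) :
    {a : ℝ | a ∈ B ∧ a ≤ c}.Nonempty := by
  obtain ⟨a, haB, h1, h2⟩ := hd (c - 1)
  exact ⟨a, haB, by linarith⟩

lemma sset_bdd (c : ℝ) : BddAbove {a : ℝ | a ∈ B ∧ a ≤ c} := ⟨c, fun a ha => ha.2⟩

lemma mfun_ge (hd : ∀ a : ℝ, (B ∩ Set.Icc a (a + 1)).Nonempty) (c : ℝ) :
    c ≤ mfun B c := le_csInf (iset_nonempty hd c) fun a ha => ha.2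

lemma mfun_le (hd : ∀ a : ℝ, (B ∩ Set.Icc a (a + 1)).Nonempty) (c : ℝ) :
    mfun B c ≤ c + 1 := by
  obtain ⟨a, haB, h1, h2⟩ := hd c
  exact le_trans (csInf_le (iset_bdd c) ⟨haB, h1⟩) h2

lemma mfun_mono (hd : ∀ a : ℝ, (B ∩ Set.Icc a (a + 1)).Nonempty) {c c' : ℝ} (h : c ≤ c') :
    mfun B c ≤ mfun B c' :=
  csInf_le_csInf (iset_bdd c) (iset_nonempty hd c') (fun a ha => ⟨ha.1, le_trans h ha.2⟩)

lemma Mfun_le (hd : ∀ a : ℝ, (B ∩ Set.Icc a (a + 1)).Nonempty) (c : ℝ) :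
    Mfun B c ≤ c := csSup_le (sset_nonempty hd c) fun a ha => ha.2

lemma Mfun_ge (hd : ∀ a : ℝ, (B ∩ Set.Icc a (a + 1)).Nonempty) (c : ℝ) :
    c - 1 ≤ Mfun B c := by
  obtain ⟨a, haB, h1, h2⟩ := hd (c - 1)
  exact le_trans h1 (le_csSup (sset_bdd c) ⟨haB, by linarith⟩)

lemma Mfun_mono (hd : ∀ a : ℝ, (B ∩ Set.Icc a (a + 1)).Nonempty) {c c' : ℝ} (h : c ≤ c') :
    Mfun B c ≤ Mfun B c' :=
  csSup_le_csSup (sset_bdd c') (sset_nonempty hd c) (fun a ha => ⟨ha.1, le_trans ha.2 h⟩)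

lemma mfun_leftcont (hB : IsClosed B) (hd : ∀ a : ℝ, (B ∩ Set.Icc a (a + 1)).Nonempty)
    (c ε : ℝ) (hε : 0 < ε) : ∃ δ > 0, mfun B c - ε ≤ mfun B (c - δ) := by
  by_cases hc : c ∈ B
  · refine ⟨ε, hε, ?_⟩
    have h1 : mfun B c ≤ c := csInf_le (iset_bdd c) ⟨hc, le_refl c⟩
    have h2 := mfun_ge hd (c - ε)
    linarith
  · obtain ⟨δ, hδ, hball⟩ := Metric.isOpen_iff.1 hB.isOpen_compl c hc
    refine ⟨δ / 2, by linarith, ?_⟩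
    have hsub : {a : ℝ | a ∈ B ∧ c - δ / 2 ≤ a} ⊆ {a : ℝ | a ∈ B ∧ c ≤ a} := by
      rintro a ⟨haB, ha⟩
      refine ⟨haB, ?_⟩
      by_contra hlt
      push_neg at hlt
      have : a ∈ Metric.ball c δ := by
        rw [Metric.mem_ball, Real.dist_eq, abs_lt]; constructor <;> linarith
      exact hball this haB
    have h3 : mfun B c ≤ mfun B (c - δ / 2) :=
      csInf_le_csInf (iset_bdd c) (iset_nonempty hd (c - δ / 2)) hsub
    linarith

lemma Mfun_rightcont (hB : IsClosed B) (hd : ∀ a : ℝ, (B ∩ Set.Icc a (a + 1)).Nonempty)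
    (c ε : ℝ) (hε : 0 < ε) : ∃ δ > 0, Mfun B (c + δ) ≤ Mfun B c + ε := by
  by_cases hc : c ∈ B
  · refine ⟨ε, hε, ?_⟩
    have h1 : c ≤ Mfun B c := le_csSup (sset_bdd c) ⟨hc, le_refl c⟩
    have h2 := Mfun_le hd (c + ε)
    linarith
  · obtain ⟨δ, hδ, hball⟩ := Metric.isOpen_iff.1 hB.isOpen_compl c hc
    refine ⟨δ / 2, by linarith, ?_⟩
    have hsub : {a : ℝ | a ∈ B ∧ a ≤ c + δ / 2} ⊆ {a : ℝ | a ∈ B ∧ a ≤ c} := by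
      rintro a ⟨haB, ha⟩
      refine ⟨haB, ?_⟩
      by_contra hlt
      push_neg at hlt
      have : a ∈ Metric.ball c δ := by
        rw [Metric.mem_ball, Real.dist_eq, abs_lt]; constructor <;> linarith
      exact hball this haB
    have h3 : Mfun B (c + δ / 2) ≤ Mfun B c :=
      csSup_le_csSup (sset_bdd c) (sset_nonempty hd (c + δ / 2)) hsub
    linarith

lemma main (n : ℕ) (A : ℕ → Set ℝ)
    (hclosed : ∀ i, 1 ≤ i → i < n → IsClosed (A i))
    (hdense : ∀ i, 1 ≤ i → i < n → ∀ a : ℝ, (A i ∩ Set.Icc a (a + 1)).Nonempty) :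
    ∀ i : ℕ, i + 1 ≤ n →
      (∀ x y : ℝ, x ≤ y → Lfun A (i + 1) x ≤ Lfun A (i + 1) y ∧
        Rfun A (i + 1) x ≤ Rfun A (i + 1) y) ∧
      (∀ x : ℝ, Lfun A (i + 1) x + 1 ≤ Rfun A (i + 1) x) ∧
      (∀ x : ℝ, ((i : ℝ) + 1) * x + 1 ≤ Rfun A (i + 1) x ∧
        Rfun A (i + 1) x ≤ ((i : ℝ) + 1) * x + ((i : ℝ) + 1)) ∧
      (∀ x ε : ℝ, 0 < ε → ∃ δ > 0, Lfun A (i + 1) x - ε ≤ Lfun A (i + 1) (x - δ)) ∧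
      (∀ x ε : ℝ, 0 < ε → ∃ δ > 0, Rfun A (i + 1) (x + δ) ≤ Rfun A (i + 1) x + ε) := by
  intro i
  induction i with
  | zero =>
    intro _
    refine ⟨?_, ?_, ?_, ?_, ?_⟩
    · intro x y hxy; simp only [Lfun, Rfun]; constructor <;> linarith
    · intro x; simp only [Lfun, Rfun]; linarith
    · intro x; simp only [Rfun]; push_cast; constructor <;> linarith
    · intro x ε hε; exact ⟨ε, hε, by simp only [Lfun]; linarith⟩
    · intro x ε hε; exact ⟨ε, hε, by simp only [Rfun]; linarith⟩
  | succ i ih =>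
    intro hn
    obtain ⟨mono, gap, bounds, lcont, rcont⟩ := ih (by omega)
    have hB : IsClosed (A (i + 1)) := hclosed (i + 1) (by omega) (by omega)
    have hd : ∀ a : ℝ, (A (i + 1) ∩ Set.Icc a (a + 1)).Nonempty :=
      hdense (i + 1) (by omega) (by omega)
    refine ⟨?_, ?_, ?_, ?_, ?_⟩
    · intro x y hxy
      rw [Lfun_succ, Lfun_succ, Rfun_succ, Rfun_succ]
      obtain ⟨hL, hR⟩ := mono x y hxy
      exact ⟨add_le_add hxy (mfun_mono hd hL),
        add_le_add (add_le_add hxy le_rfl) (Mfun_mono hd hR)⟩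
    · intro x
      obtain ⟨a, haB, ha1, ha2⟩ := hd (Lfun A (i + 1) x)
      have hm : mfun (A (i + 1)) (Lfun A (i + 1) x) ≤ a := csInf_le (iset_bdd _) ⟨haB, ha1⟩
      have haR : a ≤ Rfun A (i + 1) x := le_trans ha2 (gap x)
      have hM : a ≤ Mfun (A (i + 1)) (Rfun A (i + 1) x) := le_csSup (sset_bdd _) ⟨haB, haR⟩
      rw [Lfun_succ, Rfun_succ]; linarith
    · intro x
      have h1 := Mfun_le hd (Rfun A (i + 1) x)
      have h2 := Mfun_ge hd (Rfun A (i + 1) x)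
      obtain ⟨b1, b2⟩ := bounds x
      rw [Rfun_succ]
      push_cast
      constructor <;> nlinarith
    · intro x ε hε
      obtain ⟨δ₁, hδ₁, hδ₁'⟩ := mfun_leftcont hB hd (Lfun A (i + 1) x) (ε / 2) (by linarith)
      obtain ⟨δ₂, hδ₂, hδ₂'⟩ := lcont x δ₁ hδ₁
      refine ⟨min δ₂ (ε / 2), by positivity, ?_⟩
      have hxy : x - δ₂ ≤ x - min δ₂ (ε / 2) := by
        have := min_le_left δ₂ (ε / 2); linarith
      have h1 : Lfun A (i + 1) x - δ₁ ≤ Lfun A (i + 1) (x - min δ₂ (ε / 2)) :=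
        le_trans hδ₂' (mono _ _ hxy).1
      have h2 : mfun (A (i + 1)) (Lfun A (i + 1) x) - ε / 2 ≤
          mfun (A (i + 1)) (Lfun A (i + 1) (x - min δ₂ (ε / 2))) :=
        le_trans hδ₁' (mfun_mono hd h1)
      rw [Lfun_succ, Lfun_succ]
      have hδ : min δ₂ (ε / 2) ≤ ε / 2 := min_le_right _ _
      linarith
    · intro x ε hε
      obtain ⟨δ₁, hδ₁, hδ₁'⟩ := Mfun_rightcont hB hd (Rfun A (i + 1) x) (ε / 2) (by linarith)
      obtain ⟨δ₂, hδ₂, hδ₂'⟩ := rcont x δ₁ hδ₁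
      refine ⟨min δ₂ (ε / 2), by positivity, ?_⟩
      have hxy : x + min δ₂ (ε / 2) ≤ x + δ₂ := by
        have := min_le_left δ₂ (ε / 2); linarith
      have h1 : Rfun A (i + 1) (x + min δ₂ (ε / 2)) ≤ Rfun A (i + 1) x + δ₁ :=
        le_trans (mono _ _ hxy).2 hδ₂'
      have h2 : Mfun (A (i + 1)) (Rfun A (i + 1) (x + min δ₂ (ε / 2))) ≤
          Mfun (A (i + 1)) (Rfun A (i + 1) x) + ε / 2 :=
        le_trans (Mfun_mono hd h1) hδ₁'
      rw [Rfun_succ, Rfun_succ]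
      have hδ : min δ₂ (ε / 2) ≤ ε / 2 := min_le_right _ _
      linarith

end IntervalsCoverAux

/-- **Lemma (covering)**: for every `h ∈ {1,…,n}` the intervals
`J_h(x) = [L_h(x), R_h(x)]`, `x ∈ ℝ`, cover all of `ℝ`. -/
theorem intervals_cover (n : ℕ) (hn : 1 ≤ n) (A : ℕ → Set ℝ)
    (hclosed : ∀ i, 1 ≤ i → i < n → IsClosed (A i))
    (hdense : ∀ i, 1 ≤ i → i < n → ∀ a : ℝ, (A i ∩ Set.Icc a (a + 1)).Nonempty) :
    ∀ h, 1 ≤ h → h ≤ n → ∀ p : ℝ, ∃ x : ℝ, Lfun A h x ≤ p ∧ p ≤ Rfun A h x := by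
  intro h h1 h2 p
  obtain ⟨i, rfl⟩ : ∃ i, h = i + 1 := ⟨h - 1, by omega⟩
  obtain ⟨mono, gap, bounds, lcont, rcont⟩ :=
    IntervalsCoverAux.main n A hclosed hdense i (by omega)
  set S : Set ℝ := {x | p ≤ Rfun A (i + 1) x} with hS
  have hipos : (0 : ℝ) < (i : ℝ) + 1 := by positivity
  have hSne : S.Nonempty := by
    refine ⟨max p 0, ?_⟩
    have hb := (bounds (max p 0)).1
    have hx0 : (0 : ℝ) ≤ max p 0 := le_max_right p 0
    have hxp : p ≤ max p 0 := le_max_left p 0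
    have : (1 : ℝ) * max p 0 ≤ ((i : ℝ) + 1) * max p 0 := by nlinarith
    simp only [hS, Set.mem_setOf_eq]
    nlinarith
  have hSbdd : BddBelow S := by
    refine ⟨(p - ((i : ℝ) + 1)) / ((i : ℝ) + 1), ?_⟩
    intro x hx
    have hb := (bounds x).2
    have hpx : p ≤ Rfun A (i + 1) x := hx
    rw [div_le_iff₀ hipos]
    nlinarith
  set x₀ : ℝ := sInf S with hx₀
  have hR : p ≤ Rfun A (i + 1) x₀ := by
    refine le_of_forall_pos_le_add ?_
    intro ε hε
    obtain ⟨δ, hδ, hδ'⟩ := rcont x₀ ε hε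
    have hex : ∃ x ∈ S, x < x₀ + δ := by
      by_contra hcon
      push_neg at hcon
      have : x₀ + δ ≤ x₀ := le_csInf hSne hcon
      linarith
    obtain ⟨x, hxS, hxlt⟩ := hex
    have hpx : p ≤ Rfun A (i + 1) x := hxS
    have := (mono x (x₀ + δ) (le_of_lt hxlt)).2
    linarith
  have hL : Lfun A (i + 1) x₀ ≤ p := by
    refine le_of_forall_pos_le_add ?_
    intro ε hε
    obtain ⟨δ, hδ, hδ'⟩ := lcont x₀ ε hε
    have hnotS : x₀ - δ ∉ S := by
      intro hmem
      have : x₀ ≤ x₀ - δ := csInf_le hSbdd hmem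
      linarith
    have hRlt : Rfun A (i + 1) (x₀ - δ) < p := by
      by_contra hge
      push_neg at hge
      exact hnotS hge
    have hg := gap (x₀ - δ)
    linarith
  exact ⟨x₀, hL, hR⟩
end

section
/- Let n ≥ 1 and let A_1, …, A_{n−1} ⊆ ℝ be closed sets with A_i ∩ [a, a+1] ≠ ∅ for every a ∈ ℝ, and define L_h, R_h as in the recursion. Then for every i ∈ {1, …, n}: (a) L_i and R_i are nondecreasing functions of x; (b) R_i(x) − L_i(x) ≥ 1 for all x ∈ ℝ; (c) L_i(x) → +∞ and R_i(x) → +∞ as x → +∞; (d) L_i(x) → −∞ and R_i(x) → −∞ as x → −∞. -/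
/-- Basic properties of `L_i` and `R_i` for `i ∈ {1,…,n}`:
(a) both are nondecreasing; (b) `R_i(x) − L_i(x) ≥ 1`;
(c) both tend to `+∞` as `x → +∞`; (d) both tend to `−∞` as `x → −∞`. -/
theorem LR_basic_properties (n : ℕ) (hn : 1 ≤ n) (A : ℕ → Set ℝ)
    (hclosed : ∀ i, 1 ≤ i → i < n → IsClosed (A i))
    (hdense : ∀ i, 1 ≤ i → i < n → ∀ a : ℝ, (A i ∩ Set.Icc a (a + 1)).Nonempty) :
    ∀ i, 1 ≤ i → i ≤ n →
      Monotone (Lfun A i) ∧ Monotone (Rfun A i) ∧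
      (∀ x : ℝ, 1 ≤ Rfun A i x - Lfun A i x) ∧
      Filter.Tendsto (Lfun A i) Filter.atTop Filter.atTop ∧
      Filter.Tendsto (Rfun A i) Filter.atTop Filter.atTop ∧
      Filter.Tendsto (Lfun A i) Filter.atBot Filter.atBot ∧
      Filter.Tendsto (Rfun A i) Filter.atBot Filter.atBot := by
  intro i
  induction i with
  | zero => intro h; omega
  | succ i ih =>
    intro _ hin
    match i, ih with
    | 0, _ =>
      -- base case i = 1
      refine ⟨fun x y h => h, fun x y h => by simpa [Rfun] using h, ?_, ?_, ?_, ?_, ?_⟩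
      · intro x; simp [Lfun, Rfun]
      · exact Filter.tendsto_id
      · exact Filter.tendsto_atTop_add_const_right _ 1 Filter.tendsto_id
      · exact Filter.tendsto_id
      · exact Filter.tendsto_atBot_add_const_right _ 1 Filter.tendsto_id
    | j + 1, ih =>
      have hjn : j + 1 < n := by omega
      obtain ⟨hLmono, hRmono, hgap, hLtop, hRtop, hLbot, hRbot⟩ :=
        ih (by omega) (by omega)
      set S : ℝ → Set ℝ := fun x => {a : ℝ | a ∈ A (j + 1) ∧ Lfun A (j + 1) x ≤ a} with hS
      set T : ℝ → Set ℝ := fun x => {a : ℝ | a ∈ A (j + 1) ∧ a ≤ Rfun A (j + 1) x} with hT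
      -- a witness in S x which is ≤ L x + 1 and ≤ R x
      have hwit : ∀ x : ℝ, ∃ a, a ∈ S x ∧ a ≤ Lfun A (j + 1) x + 1 := by
        intro x
        obtain ⟨a, haA, ha1, ha2⟩ := hdense (j + 1) (by omega) hjn (Lfun A (j + 1) x)
        exact ⟨a, ⟨haA, ha1⟩, ha2⟩
      have hSne : ∀ x : ℝ, (S x).Nonempty := fun x => ⟨(hwit x).choose, (hwit x).choose_spec.1⟩
      have hSbdd : ∀ x : ℝ, BddBelow (S x) := fun x => ⟨Lfun A (j + 1) x, fun a ha => ha.2⟩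
      have hwitT : ∀ x : ℝ, ∃ a, a ∈ T x ∧ Rfun A (j + 1) x - 1 ≤ a := by
        intro x
        obtain ⟨a, haA, ha1, ha2⟩ := hdense (j + 1) (by omega) hjn (Rfun A (j + 1) x - 1)
        exact ⟨a, ⟨haA, by linarith⟩, ha1⟩
      have hTne : ∀ x : ℝ, (T x).Nonempty := fun x => ⟨(hwitT x).choose, (hwitT x).choose_spec.1⟩
      have hTbdd : ∀ x : ℝ, BddAbove (T x) := fun x => ⟨Rfun A (j + 1) x, fun a ha => ha.2⟩
      -- bounds on sInf and sSup
      have hinf_lb : ∀ x : ℝ, Lfun A (j + 1) x ≤ sInf (S x) :=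
        fun x => le_csInf (hSne x) (fun a ha => ha.2)
      have hinf_ub : ∀ x : ℝ, sInf (S x) ≤ Lfun A (j + 1) x + 1 := by
        intro x
        obtain ⟨a, haS, hale⟩ := hwit x
        exact le_trans (csInf_le (hSbdd x) haS) hale
      have hsup_ub : ∀ x : ℝ, sSup (T x) ≤ Rfun A (j + 1) x :=
        fun x => csSup_le (hTne x) (fun a ha => ha.2)
      have hsup_lb : ∀ x : ℝ, Rfun A (j + 1) x - 1 ≤ sSup (T x) := by
        intro x
        obtain ⟨a, haT, hle⟩ := hwitT x
        exact le_trans hle (le_csSup (hTbdd x) haT)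
      have hinf_le_sup : ∀ x : ℝ, sInf (S x) ≤ sSup (T x) := by
        intro x
        obtain ⟨a, haS, hale⟩ := hwit x
        have haT : a ∈ T x := ⟨haS.1, by have := hgap x; linarith⟩
        exact le_trans (csInf_le (hSbdd x) haS) (le_csSup (hTbdd x) haT)
      have hLdef : ∀ x : ℝ, Lfun A (j + 2) x = x + sInf (S x) := fun x => rfl
      have hRdef : ∀ x : ℝ, Rfun A (j + 2) x = x + 1 + sSup (T x) := fun x => rfl
      refine ⟨?_, ?_, ?_, ?_, ?_, ?_, ?_⟩
      · -- L monotone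
        intro x y hxy
        rw [hLdef x, hLdef y]
        have hsub : S y ⊆ S x := fun a ha => ⟨ha.1, le_trans (hLmono hxy) ha.2⟩
        exact add_le_add hxy (csInf_le_csInf (hSbdd x) (hSne y) hsub)
      · -- R monotone
        intro x y hxy
        rw [hRdef x, hRdef y]
        have hsub : T x ⊆ T y := fun a ha => ⟨ha.1, le_trans ha.2 (hRmono hxy)⟩
        exact add_le_add (by linarith) (csSup_le_csSup (hTbdd y) (hTne x) hsub)
      · -- gap
        intro x
        rw [hLdef x, hRdef x]
        have := hinf_le_sup x
        linarith
      · -- L atTop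
        refine Filter.tendsto_atTop_mono (f := fun x => x + Lfun A (j + 1) x) ?_ ?_
        · intro x; rw [hLdef x]; exact add_le_add_right (hinf_lb x) x
        · exact Filter.Tendsto.atTop_add_atTop Filter.tendsto_id hLtop
      · -- R atTop
        refine Filter.tendsto_atTop_mono (f := fun x => x + Rfun A (j + 1) x) ?_ ?_
        · intro x; rw [hRdef x]; have := hsup_lb x; linarith
        · exact Filter.Tendsto.atTop_add_atTop Filter.tendsto_id hRtop
      · -- L atBot
        refine Filter.tendsto_atBot_mono (f := fun x => x + Lfun A (j + 1) x + 1) ?_ ?_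
        · intro x; rw [hLdef x]; have := hinf_ub x; linarith
        · exact Filter.tendsto_atBot_add_const_right _ 1
            (Filter.Tendsto.atBot_add_atBot Filter.tendsto_id hLbot)
      · -- R atBot
        refine Filter.tendsto_atBot_mono (f := fun x => x + 1 + Rfun A (j + 1) x) ?_ ?_
        · intro x; rw [hRdef x]; have := hsup_ub x; linarith
        · exact Filter.Tendsto.atBot_add_atBot
            (Filter.tendsto_atBot_add_const_right _ 1 Filter.tendsto_id) hRbot
end

section
/- Let n ≥ 1 and let A_1, …, A_{n−1} ⊆ ℝ be closed sets with A_i ∩ [a, a+1] ≠ ∅ for every a ∈ ℝ, and define L_h, R_h as in the recursion. Then for every i ∈ {1, …, n}, the function L_i is left continuous and the function R_i is right continuous. -/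
open Set Filter Topology



section OneStep

variable {A : Set ℝ}

/-- one-step min function -/
noncomputable def gI (A : Set ℝ) (t : ℝ) : ℝ := sInf {a : ℝ | a ∈ A ∧ t ≤ a}

noncomputable def gS (A : Set ℝ) (t : ℝ) : ℝ := sSup {a : ℝ | a ∈ A ∧ a ≤ t}

lemma gI_set_eq (A : Set ℝ) (t : ℝ) : {a : ℝ | a ∈ A ∧ t ≤ a} = A ∩ Set.Ici t := by
  ext a; simp [Set.mem_Ici, Set.mem_setOf_eq]

lemma gS_set_eq (A : Set ℝ) (t : ℝ) : {a : ℝ | a ∈ A ∧ a ≤ t} = A ∩ Set.Iic t := by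
  ext a; simp [Set.mem_Iic, Set.mem_setOf_eq]

lemma gI_nonempty (hd : ∀ a : ℝ, (A ∩ Set.Icc a (a + 1)).Nonempty) (t : ℝ) :
    {a : ℝ | a ∈ A ∧ t ≤ a}.Nonempty := by
  obtain ⟨a, haA, hta, _⟩ := hd t
  exact ⟨a, haA, hta⟩

lemma gS_nonempty (hd : ∀ a : ℝ, (A ∩ Set.Icc a (a + 1)).Nonempty) (t : ℝ) :
    {a : ℝ | a ∈ A ∧ a ≤ t}.Nonempty := by
  obtain ⟨a, haA, _, hat⟩ := hd (t - 1)
  exact ⟨a, haA, by linarith⟩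

lemma gI_bddBelow (A : Set ℝ) (t : ℝ) : BddBelow {a : ℝ | a ∈ A ∧ t ≤ a} :=
  ⟨t, fun a ha => ha.2⟩

lemma gS_bddAbove (A : Set ℝ) (t : ℝ) : BddAbove {a : ℝ | a ∈ A ∧ a ≤ t} :=
  ⟨t, fun a ha => ha.2⟩

lemma gI_mem (hA : IsClosed A) (hd : ∀ a : ℝ, (A ∩ Set.Icc a (a + 1)).Nonempty) (t : ℝ) :
    gI A t ∈ {a : ℝ | a ∈ A ∧ t ≤ a} := by
  have hcl : IsClosed {a : ℝ | a ∈ A ∧ t ≤ a} := by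
    rw [gI_set_eq]; exact hA.inter isClosed_Ici
  exact hcl.csInf_mem (gI_nonempty hd t) (gI_bddBelow A t)

lemma gS_mem (hA : IsClosed A) (hd : ∀ a : ℝ, (A ∩ Set.Icc a (a + 1)).Nonempty) (t : ℝ) :
    gS A t ∈ {a : ℝ | a ∈ A ∧ a ≤ t} := by
  have hcl : IsClosed {a : ℝ | a ∈ A ∧ a ≤ t} := by
    rw [gS_set_eq]; exact hA.inter isClosed_Iic
  exact hcl.csSup_mem (gS_nonempty hd t) (gS_bddAbove A t)

lemma gI_mono (hd : ∀ a : ℝ, (A ∩ Set.Icc a (a + 1)).Nonempty) : Monotone (gI A) := by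
  intro s t hst
  exact csInf_le_csInf (gI_bddBelow A s) (gI_nonempty hd t)
    (fun a ha => ⟨ha.1, le_trans hst ha.2⟩)

lemma gS_mono (hd : ∀ a : ℝ, (A ∩ Set.Icc a (a + 1)).Nonempty) : Monotone (gS A) := by
  intro s t hst
  exact csSup_le_csSup (gS_bddAbove A t) (gS_nonempty hd s)
    (fun a ha => ⟨ha.1, le_trans ha.2 hst⟩)

lemma gI_ge (hd : ∀ a : ℝ, (A ∩ Set.Icc a (a + 1)).Nonempty) (t : ℝ) : t ≤ gI A t :=
  le_csInf (gI_nonempty hd t) (fun a ha => ha.2)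

lemma gS_le (hd : ∀ a : ℝ, (A ∩ Set.Icc a (a + 1)).Nonempty) (t : ℝ) : gS A t ≤ t :=
  csSup_le (gS_nonempty hd t) (fun a ha => ha.2)

lemma gI_left_cont (hA : IsClosed A) (hd : ∀ a : ℝ, (A ∩ Set.Icc a (a + 1)).Nonempty)
    (t₀ : ℝ) : ContinuousWithinAt (gI A) (Set.Iic t₀) t₀ := by
  by_cases ht : t₀ ∈ A
  · -- g t₀ = t₀, squeeze
    have hg0 : gI A t₀ = t₀ :=
      le_antisymm (csInf_le (gI_bddBelow A t₀) ⟨ht, le_rfl⟩) (gI_ge hd t₀)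
    have hlo : ∀ᶠ t in 𝓝[≤] t₀, t ≤ gI A t :=
      Filter.Eventually.of_forall (fun t => gI_ge hd t)
    have hhi : ∀ᶠ t in 𝓝[≤] t₀, gI A t ≤ t₀ := by
      filter_upwards [self_mem_nhdsWithin] with t (ht' : t ≤ t₀)
      exact csInf_le (gI_bddBelow A t) ⟨ht, ht'⟩
    have : Tendsto (gI A) (𝓝[≤] t₀) (𝓝 t₀) :=
      tendsto_of_tendsto_of_tendsto_of_le_of_le'
        (tendsto_id.mono_right nhdsWithin_le_nhds) tendsto_const_nhds hlo hhi
    simpa [ContinuousWithinAt, hg0] using this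
  · -- locally constant on the left
    obtain ⟨ε, hε, hball⟩ := Metric.isOpen_iff.1 hA.isOpen_compl t₀ ht
    have key : ∀ t ∈ Set.Ioc (t₀ - ε) t₀, gI A t = gI A t₀ := by
      intro t ⟨ht1, ht2⟩
      have hset : {a : ℝ | a ∈ A ∧ t ≤ a} = {a : ℝ | a ∈ A ∧ t₀ ≤ a} := by
        ext a
        constructor
        · rintro ⟨haA, hta⟩
          refine ⟨haA, ?_⟩
          by_contra h
          push_neg at h
          have : a ∈ Metric.ball t₀ ε := by
            rw [Metric.mem_ball, Real.dist_eq, abs_lt]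
            constructor <;> linarith
          exact hball this haA
        · rintro ⟨haA, hta⟩
          exact ⟨haA, le_trans ht2 hta⟩
      simp [gI, hset]
    have hev : ∀ᶠ t in 𝓝[≤] t₀, gI A t = gI A t₀ := by
      filter_upwards [Ioc_mem_nhdsLE (by linarith : t₀ - ε < t₀)] with t ht'
      exact key t ht'
    exact Tendsto.congr' (hev.mono fun t h => h.symm) tendsto_const_nhds

lemma gS_right_cont (hA : IsClosed A) (hd : ∀ a : ℝ, (A ∩ Set.Icc a (a + 1)).Nonempty)
    (t₀ : ℝ) : ContinuousWithinAt (gS A) (Set.Ici t₀) t₀ := by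
  by_cases ht : t₀ ∈ A
  · have hg0 : gS A t₀ = t₀ :=
      le_antisymm (gS_le hd t₀) (le_csSup (gS_bddAbove A t₀) ⟨ht, le_rfl⟩)
    have hhi : ∀ᶠ t in 𝓝[≥] t₀, gS A t ≤ t :=
      Filter.Eventually.of_forall (fun t => gS_le hd t)
    have hlo : ∀ᶠ t in 𝓝[≥] t₀, t₀ ≤ gS A t := by
      filter_upwards [self_mem_nhdsWithin] with t (ht' : t₀ ≤ t)
      exact le_csSup (gS_bddAbove A t) ⟨ht, ht'⟩
    have : Tendsto (gS A) (𝓝[≥] t₀) (𝓝 t₀) :=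
      tendsto_of_tendsto_of_tendsto_of_le_of_le' tendsto_const_nhds (tendsto_id.mono_right nhdsWithin_le_nhds) hlo hhi
    simpa [ContinuousWithinAt, hg0] using this
  · obtain ⟨ε, hε, hball⟩ := Metric.isOpen_iff.1 hA.isOpen_compl t₀ ht
    have key : ∀ t ∈ Set.Ico t₀ (t₀ + ε), gS A t = gS A t₀ := by
      intro t ⟨ht1, ht2⟩
      have hset : {a : ℝ | a ∈ A ∧ a ≤ t} = {a : ℝ | a ∈ A ∧ a ≤ t₀} := by
        ext a
        constructor
        · rintro ⟨haA, hta⟩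
          refine ⟨haA, ?_⟩
          by_contra h
          push_neg at h
          have : a ∈ Metric.ball t₀ ε := by
            rw [Metric.mem_ball, Real.dist_eq, abs_lt]
            constructor <;> linarith
          exact hball this haA
        · rintro ⟨haA, hta⟩
          exact ⟨haA, le_trans hta ht1⟩
      simp [gS, hset]
    have hev : ∀ᶠ t in 𝓝[≥] t₀, gS A t = gS A t₀ := by
      filter_upwards [Ico_mem_nhdsGE (by linarith : t₀ < t₀ + ε)] with t ht'
      exact key t ht'
    exact Tendsto.congr' (hev.mono fun t h => h.symm) tendsto_const_nhds

end OneStep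

/-- For every `i ∈ {1,…,n}`, the function `L_i` is left continuous and the function
`R_i` is right continuous. -/
theorem L_left_continuous_R_right_continuous (n : ℕ) (hn : 1 ≤ n) (A : ℕ → Set ℝ)
    (hclosed : ∀ i, 1 ≤ i → i < n → IsClosed (A i))
    (hdense : ∀ i, 1 ≤ i → i < n → ∀ a : ℝ, (A i ∩ Set.Icc a (a + 1)).Nonempty) :
    ∀ i, 1 ≤ i → i ≤ n →
      (∀ x : ℝ, ContinuousWithinAt (Lfun A i) (Set.Iic x) x) ∧
      (∀ x : ℝ, ContinuousWithinAt (Rfun A i) (Set.Ici x) x) := by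
  have key : ∀ i, i ≤ n →
      (Monotone (Lfun A i) ∧ ∀ x : ℝ, ContinuousWithinAt (Lfun A i) (Set.Iic x) x) ∧
      (Monotone (Rfun A i) ∧ ∀ x : ℝ, ContinuousWithinAt (Rfun A i) (Set.Ici x) x) := by
    intro i
    induction i with
    | zero =>
      intro _
      refine ⟨⟨fun a b h => h, fun x => continuousWithinAt_id⟩,
        ⟨fun a b h => by simpa [Rfun] using h, fun x => ?_⟩⟩
      have : Rfun A 0 = fun x : ℝ => x + 1 := rfl
      rw [this]
      exact continuousWithinAt_id.add continuousWithinAt_const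
    | succ i ih =>
      intro hin
      cases i with
      | zero =>
        refine ⟨⟨fun a b h => h, fun x => continuousWithinAt_id⟩,
          ⟨fun a b h => by simpa [Rfun] using h, fun x => ?_⟩⟩
        have : Rfun A 1 = fun x : ℝ => x + 1 := rfl
        rw [this]
        exact continuousWithinAt_id.add continuousWithinAt_const
      | succ j =>
        obtain ⟨⟨hLmono, hLcont⟩, hRmono, hRcont⟩ := ih (by omega)
        have hA : IsClosed (A (j + 1)) := hclosed (j + 1) (by omega) (by omega)
        have hd : ∀ a : ℝ, (A (j + 1) ∩ Set.Icc a (a + 1)).Nonempty :=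
          hdense (j + 1) (by omega) (by omega)
        have hLeq : Lfun A (j + 2) = fun x => x + gI (A (j + 1)) (Lfun A (j + 1) x) := rfl
        have hReq : Rfun A (j + 2) = fun x => x + 1 + gS (A (j + 1)) (Rfun A (j + 1) x) := rfl
        rw [hLeq, hReq]
        refine ⟨⟨?_, ?_⟩, ?_, ?_⟩
        · exact monotone_id.add ((gI_mono hd).comp hLmono)
        · intro x
          have hmap : Set.MapsTo (Lfun A (j + 1)) (Set.Iic x) (Set.Iic (Lfun A (j + 1) x)) :=
            fun y hy => hLmono hy
          exact continuousWithinAt_id.add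
            ((gI_left_cont hA hd (Lfun A (j + 1) x)).comp (hLcont x) hmap)
        · exact (monotone_id.add_const 1).add ((gS_mono hd).comp hRmono)
        · intro x
          have hmap : Set.MapsTo (Rfun A (j + 1)) (Set.Ici x) (Set.Ici (Rfun A (j + 1) x)) :=
            fun y hy => hRmono hy
          exact (continuousWithinAt_id.add continuousWithinAt_const).add
            ((gS_right_cont hA hd (Rfun A (j + 1) x)).comp (hRcont x) hmap)
  exact fun i _ hin => ⟨((key i hin).1).2, ((key i hin).2).2⟩
end

section
/- Let n ≥ 1, let A_0 = {0} and let A_1, …, A_{n−1} ⊆ ℝ be closed sets with A_i ∩ [a, a+1] ≠ ∅ for every a ∈ ℝ, and define L_h, R_h as in the recursion. Then for every x ∈ ℝ, every h ∈ {1, …, n−1}, and every point p ∈ A_h with L_h(x) ≤ p ≤ R_h(x), there exists an x-good partial transversal ending at p: elements a_0 = 0 and a_i ∈ A_i for i ∈ {1, …, h} with a_h = p and a_i − a_{i-1} ∈ [x, x+1] for every i ∈ {1, …, h}. -/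
lemma Sinf_mem (A : ℕ → Set ℝ) (m : ℕ) (x : ℝ) (hc : IsClosed (A m))
    (hd : ∀ a : ℝ, (A m ∩ Set.Icc a (a + 1)).Nonempty) :
    sInf {a : ℝ | a ∈ A m ∧ Lfun A m x ≤ a} ∈ {a : ℝ | a ∈ A m ∧ Lfun A m x ≤ a} := by
  have hset : {a : ℝ | a ∈ A m ∧ Lfun A m x ≤ a} = A m ∩ Set.Ici (Lfun A m x) := rfl
  rw [hset]
  apply IsClosed.csInf_mem (hc.inter isClosed_Ici)
  · obtain ⟨y, hyA, hy1, hy2⟩ := hd (Lfun A m x)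
    exact ⟨y, hyA, hy1⟩
  · exact ⟨Lfun A m x, fun y hy => hy.2⟩

lemma Ssup_mem (A : ℕ → Set ℝ) (m : ℕ) (x : ℝ) (hc : IsClosed (A m))
    (hd : ∀ a : ℝ, (A m ∩ Set.Icc a (a + 1)).Nonempty) :
    sSup {a : ℝ | a ∈ A m ∧ a ≤ Rfun A m x} ∈ {a : ℝ | a ∈ A m ∧ a ≤ Rfun A m x} := by
  have hset : {a : ℝ | a ∈ A m ∧ a ≤ Rfun A m x} = A m ∩ Set.Iic (Rfun A m x) := rfl
  rw [hset]
  apply IsClosed.csSup_mem (hc.inter isClosed_Iic)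
  · obtain ⟨y, hyA, hy1, hy2⟩ := hd (Rfun A m x - 1)
    exact ⟨y, hyA, by simp only [Set.mem_Iic]; linarith⟩
  · exact ⟨Rfun A m x, fun y hy => hy.2⟩

lemma SbddBelow (A : ℕ → Set ℝ) (m : ℕ) (x : ℝ) :
    BddBelow {a : ℝ | a ∈ A m ∧ Lfun A m x ≤ a} :=
  ⟨Lfun A m x, fun y hy => hy.2⟩

lemma TbddAbove (A : ℕ → Set ℝ) (m : ℕ) (x : ℝ) :
    BddAbove {a : ℝ | a ∈ A m ∧ a ≤ Rfun A m x} :=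
  ⟨Rfun A m x, fun y hy => hy.2⟩

lemma width (n : ℕ) (A : ℕ → Set ℝ)
    (hclosed : ∀ i, 1 ≤ i → i < n → IsClosed (A i))
    (hdense : ∀ i, 1 ≤ i → i < n → ∀ a : ℝ, (A i ∩ Set.Icc a (a + 1)).Nonempty)
    (x : ℝ) : ∀ h, 1 ≤ h → h ≤ n → Lfun A h x + 1 ≤ Rfun A h x := by
  intro h
  induction h with
  | zero => omega
  | succ m ih =>
    intro _ hle
    rcases Nat.eq_zero_or_pos m with hm | hm
    · subst hm; simp [Lfun, Rfun]
    · obtain ⟨k, rfl⟩ : ∃ k, m = k + 1 := ⟨m - 1, by omega⟩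
      have h1 : (1:ℕ) ≤ k + 1 := by omega
      have h2 : k + 1 < n := by omega
      have hih := ih h1 (by omega)
      obtain ⟨q, hqA, hq1, hq2⟩ := hdense (k + 1) h1 h2 (Lfun A (k + 1) x)
      have hqT : q ∈ {a : ℝ | a ∈ A (k + 1) ∧ a ≤ Rfun A (k + 1) x} :=
        ⟨hqA, by linarith⟩
      have hqS : q ∈ {a : ℝ | a ∈ A (k + 1) ∧ Lfun A (k + 1) x ≤ a} := ⟨hqA, hq1⟩
      have hl : sInf {a : ℝ | a ∈ A (k + 1) ∧ Lfun A (k + 1) x ≤ a} ≤ q :=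
        csInf_le (SbddBelow A (k + 1) x) hqS
      have hr : q ≤ sSup {a : ℝ | a ∈ A (k + 1) ∧ a ≤ Rfun A (k + 1) x} :=
        le_csSup (TbddAbove A (k + 1) x) hqT
      show x + sInf _ + 1 ≤ x + 1 + sSup _
      linarith

/-- If `p ∈ A h` lies in the interval `J_h(x) = [L_h(x), R_h(x)]` with
`1 ≤ h ≤ n−1`, then there is an `x`-good partial transversal ending at `p`:
points `a 0 = 0`, `a i ∈ A i` for `i ∈ {1,…,h}`, with `a h = p` and
`a i − a (i−1) ∈ [x, x+1]` for every `i ∈ {1,…,h}`. -/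
theorem x_good_partial_transversal (n : ℕ) (hn : 1 ≤ n) (A : ℕ → Set ℝ)
    (hA0 : A 0 = {0})
    (hclosed : ∀ i, 1 ≤ i → i < n → IsClosed (A i))
    (hdense : ∀ i, 1 ≤ i → i < n → ∀ a : ℝ, (A i ∩ Set.Icc a (a + 1)).Nonempty) :
    ∀ x : ℝ, ∀ h, 1 ≤ h → h < n → ∀ p ∈ A h,
      Lfun A h x ≤ p → p ≤ Rfun A h x →
      ∃ a : ℕ → ℝ, a 0 = 0 ∧ (∀ i, 1 ≤ i → i ≤ h → a i ∈ A i) ∧ a h = p ∧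
        ∀ i, 1 ≤ i → i ≤ h → a i - a (i - 1) ∈ Set.Icc x (x + 1) := by
  intro x h
  induction h with
  | zero => omega
  | succ m ih =>
    intro _ hlt p hp hL hR
    rcases Nat.eq_zero_or_pos m with hm | hm
    · -- base case h = 1
      subst hm
      refine ⟨fun i => if i = 0 then 0 else p, by simp, ?_, by simp, ?_⟩
      · intro i hi1 hi2
        have : i = 1 := by omega
        subst this; simpa using hp
      · intro i hi1 hi2
        have : i = 1 := by omega
        subst this
        simp only [Lfun] at hL
        simp only [Rfun] at hR
        simp only [if_neg (by norm_num : (1:ℕ) ≠ 0), Nat.sub_self, if_pos rfl]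
        exact ⟨by simpa using hL, by simpa using hR⟩
    · obtain ⟨k, rfl⟩ : ∃ k, m = k + 1 := ⟨m - 1, by omega⟩
      have h1 : (1:ℕ) ≤ k + 1 := by omega
      have h2 : k + 1 < n := by omega
      set L := Lfun A (k + 1) x with hLdef
      set R := Rfun A (k + 1) x with hRdef
      set ℓ := sInf {a : ℝ | a ∈ A (k + 1) ∧ L ≤ a} with hldef
      set r := sSup {a : ℝ | a ∈ A (k + 1) ∧ a ≤ R} with hrdef
      have hLL : Lfun A (k + 2) x = x + ℓ := rfl
      have hRR : Rfun A (k + 2) x = x + 1 + r := rfl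
      rw [hLL] at hL
      rw [hRR] at hR
      have hℓ := Sinf_mem A (k + 1) x (hclosed _ h1 h2) (hdense _ h1 h2)
      have hr' := Ssup_mem A (k + 1) x (hclosed _ h1 h2) (hdense _ h1 h2)
      have hwidth : L + 1 ≤ R := width n A hclosed hdense x (k + 1) h1 (by omega)
      -- ℓ ≤ r
      obtain ⟨q1, hq1A, hq11, hq12⟩ := hdense (k + 1) h1 h2 L
      have hlr : ℓ ≤ r := by
        have h1' : ℓ ≤ q1 := csInf_le (SbddBelow A (k + 1) x) ⟨hq1A, hq11⟩
        have h2' : q1 ≤ r := le_csSup (TbddAbove A (k + 1) x) ⟨hq1A, by linarith⟩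
        linarith
      -- find q ∈ A (k+1), L ≤ q ≤ R, p - x - 1 ≤ q ≤ p - x
      obtain ⟨q0, hq0A, hq01, hq02⟩ := hdense (k + 1) h1 h2 (p - x - 1)
      have hq02' : q0 ≤ p - x := by linarith
      have key : ∃ q, q ∈ A (k + 1) ∧ L ≤ q ∧ q ≤ R ∧ p - x - 1 ≤ q ∧ q ≤ p - x := by
        rcases lt_or_ge q0 L with hc1 | hc1
        · exact ⟨ℓ, hℓ.1, hℓ.2, by linarith [hr'.2], by linarith [hℓ.2], by linarith⟩
        · rcases le_or_gt q0 R with hc2 | hc2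
          · exact ⟨q0, hq0A, hc1, hc2, hq01, hq02'⟩
          · refine ⟨r, hr'.1, by linarith [hℓ.2], hr'.2, by linarith, ?_⟩
            have : r ≤ R := hr'.2
            linarith
      obtain ⟨q, hqA, hqL, hqR, hq1, hq2⟩ := key
      obtain ⟨a, ha0, haA, ham, hadiff⟩ := ih h1 h2 q hqA hqL hqR
      refine ⟨fun i => if i ≤ k + 1 then a i else p, ?_, ?_, ?_, ?_⟩
      · simpa using ha0
      · intro i hi1 hi2
        by_cases hi : i ≤ k + 1
        · simpa [hi] using haA i hi1 hi
        · have : i = k + 2 := by omega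
          subst this
          simpa [hi] using hp
      · simp
      · intro i hi1 hi2
        by_cases hi : i ≤ k + 1
        · have hi' : i - 1 ≤ k + 1 := by omega
          simpa [hi, hi'] using hadiff i hi1 hi
        · have hik : i = k + 2 := by omega
          subst hik
          have e1 : ¬ (k + 2 ≤ k + 1) := by omega
          have e2 : k + 2 - 1 = k + 1 := by omega
          simp only [e1, if_neg, e2, if_pos (le_refl (k+1)), ite_true, ite_false, ham]
          constructor <;> [linarith; linarith]
end
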